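/- arXiv:0906.4875 — 2 statements merged into one kernel-verified Lean document; each statement's English description precedes it below -/
import Mathlib

section
/- Let X be a finite set with |X| ≥ 4, and let S be a collection of subsets of X satisfying the four-way partition property for X. Let T and T' be binary phylogenetic X-trees that resolve every quartet q ∈ Q_S identically, and let a, b ∈ X be distinct. Then the leaves labeled a and b form a cherry of T if and only if they form a cherry of T'. -/
/-- A binary phylogenetic `X`-tree: a finite tree (connected acyclic simple graph)
whose degree-1 vertices (leaves) are in bijection with the label set `X`, and all of
whose non-leaf vertices have degree 3. -/
structure PhyloTree {α : Type} (X : Finset α) : Type 1 where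
  V : Type
  fintypeV : Fintype V
  G : SimpleGraph V
  connected : G.Connected
  acyclic : G.IsAcyclic
  leaf : α → V
  leaf_inj : ∀ x ∈ X, ∀ y ∈ X, leaf x = leaf y → x = y
  leaf_degree : ∀ x ∈ X, (G.neighborSet (leaf x)).ncard = 1
  degree_one_is_leaf : ∀ v : V, (G.neighborSet v).ncard = 1 → ∃ x ∈ X, leaf x = v
  internal_degree : ∀ v : V, (∀ x ∈ X, leaf x ≠ v) → (G.neighborSet v).ncard = 3

namespace PhyloTree

variable {α : Type} {X : Finset α}

/-- `T` resolves the quartet `{a,b,c,d}` as `ab|cd`: the (unique) path from the leaf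
labeled `a` to the leaf labeled `b` is vertex-disjoint from the path from the leaf
labeled `c` to the leaf labeled `d`. -/
def ResolvesAs (T : PhyloTree X) (a b c d : α) : Prop :=
  ∃ (p : T.G.Walk (T.leaf a) (T.leaf b)) (q : T.G.Walk (T.leaf c) (T.leaf d)),
    p.IsPath ∧ q.IsPath ∧ ∀ v ∈ p.support, v ∉ q.support

/-- Two binary phylogenetic `X`-trees are label-isomorphic. -/
def LabelIso (T T' : PhyloTree X) : Prop :=
  ∃ φ : T.G ≃g T'.G, ∀ x ∈ X, φ (T.leaf x) = T'.leaf x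

/-- `T` and `T'` resolve the 4-element subset `q` identically. -/
def ResolveIdentically [DecidableEq α] (T T' : PhyloTree X) (q : Finset α) : Prop :=
  ∀ a b c d : α, ({a, b, c, d} : Finset α) = q →
    (T.ResolvesAs a b c d ↔ T'.ResolvesAs a b c d)

/-- A cherry: a pair of leaves adjacent to the same vertex. -/
def IsCherry (T : PhyloTree X) (a b : α) : Prop :=
  ∃ v : T.V, T.G.Adj (T.leaf a) v ∧ T.G.Adj (T.leaf b) v

end PhyloTree

/-- `Q_S`: the set of all 4-element subsets contained in at least one member of `S`. -/
def QSet {α : Type} (S : Set (Finset α)) : Set (Finset α) :=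
  {q | q.card = 4 ∧ ∃ Y ∈ S, q ⊆ Y}

/-- `S` is phylogenetically decisive for `X`: any two binary phylogenetic `X`-trees
that resolve every quartet in `Q_S` identically are label-isomorphic. -/
def PhyloDecisive {α : Type} [DecidableEq α] (X : Finset α) (S : Set (Finset α)) : Prop :=
  ∀ T T' : PhyloTree X,
    (∀ q ∈ QSet S, PhyloTree.ResolveIdentically T T' q) → PhyloTree.LabelIso T T'

/-- `S` satisfies the four-way partition property for `X`. -/
def FourWayPartitionProperty {α : Type} [DecidableEq α] (X : Finset α)
    (S : Set (Finset α)) : Prop :=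
  ∀ A1 A2 A3 A4 : Finset α,
    A1.Nonempty → A2.Nonempty → A3.Nonempty → A4.Nonempty →
    Disjoint A1 A2 → Disjoint A1 A3 → Disjoint A1 A4 →
    Disjoint A2 A3 → Disjoint A2 A4 → Disjoint A3 A4 →
    A1 ∪ A2 ∪ A3 ∪ A4 = X →
    ∃ a1 ∈ A1, ∃ a2 ∈ A2, ∃ a3 ∈ A3, ∃ a4 ∈ A4,
      ({a1, a2, a3, a4} : Finset α) ∈ QSet S

/-- `S` is decisive for the particular tree `T`. -/
def DecisiveFor {α : Type} [DecidableEq α] {X : Finset α} (S : Set (Finset α))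
    (T : PhyloTree X) : Prop :=
  ∀ T' : PhyloTree X,
    (∀ q ∈ QSet S, PhyloTree.ResolveIdentically T T' q) → PhyloTree.LabelIso T T'

open SimpleGraph in
theorem PhyloAux_dummy : True := trivial

namespace PhyloAux
open SimpleGraph
variable {V : Type} {G : SimpleGraph V}

lemma two_le_ncard {s : Set V} {x y : V} (hx : x ∈ s) (hy : y ∈ s) (hxy : x ≠ y)
    (hfin : s.Finite) : 2 ≤ s.ncard := by
  have h : ({x, y} : Set V).ncard ≤ s.ncard :=
    Set.ncard_le_ncard (by simp [Set.insert_subset_iff, hx, hy]) hfin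
  rwa [Set.ncard_pair hxy] at h

lemma internal_two_neighbors {s t v : V} {p : G.Walk s t} (hp : p.IsPath)
    (hv : v ∈ p.support) (hvs : v ≠ s) (hvt : v ≠ t) :
    ∃ n₁ n₂, n₁ ≠ n₂ ∧ G.Adj v n₁ ∧ G.Adj v n₂ ∧ n₁ ∈ p.support ∧ n₂ ∈ p.support := by
  classical
  have hsupp : p.support = (p.takeUntil v hv).support ++ (p.dropUntil v hv).support.tail := by
    rw [← Walk.support_append, Walk.take_spec]
  obtain ⟨n₂, h₂, r₂, hr₂⟩ := (p.dropUntil v hv).exists_eq_cons_of_ne hvt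
  obtain ⟨n₁, h₁, q₂, hq₂⟩ := (p.takeUntil v hv).reverse.exists_eq_cons_of_ne hvs
  have hn₁q : n₁ ∈ (p.takeUntil v hv).support := by
    have h : n₁ ∈ (p.takeUntil v hv).reverse.support := by rw [hq₂]; simp
    rwa [Walk.support_reverse, List.mem_reverse] at h
  have hn₂r : n₂ ∈ (p.dropUntil v hv).support.tail := by rw [hr₂]; simp
  have hnd := hp.support_nodup
  rw [hsupp] at hnd
  have hdisj := (List.nodup_append'.mp hnd).2.2
  exact ⟨n₁, n₂, fun h => hdisj hn₁q (h ▸ hn₂r), h₁, h₂,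
    hsupp ▸ List.mem_append_left _ hn₁q, hsupp ▸ List.mem_append_right _ hn₂r⟩

lemma support_getLast? {u n : V} (q : G.Walk u n) : q.support.getLast? = some n := by
  rw [List.getLast?_eq_getLast (q.support_ne_nil), q.getLast_support]

lemma neighbor_mem_support_unique (hG : G.IsAcyclic) {u w : V} {p : G.Walk u w}
    (hp : p.IsPath) {n n' : V} (h : G.Adj w n) (h' : G.Adj w n')
    (hn : n ∈ p.support) (hn' : n' ∈ p.support) : n = n' := by
  classical
  have key : ∀ (m : V), G.Adj w m → (hm : m ∈ p.support) →
      p.support.dropLast.getLast? = some m := by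
    intro m hadj hm
    have hr : p.dropUntil m hm = Walk.cons hadj.symm Walk.nil := by
      have h1 : (⟨p.dropUntil m hm, hp.dropUntil hm⟩ : G.Path m w)
          = ⟨Walk.cons hadj.symm Walk.nil, by simp [Walk.isPath_def, hadj.ne']⟩ :=
        isAcyclic_iff_path_unique.mp hG _ _
      exact congrArg Subtype.val h1
    have hsupp : p.support = (p.takeUntil m hm).support ++ [w] := by
      conv_lhs => rw [← Walk.take_spec p hm]
      rw [Walk.support_append, hr]
      simp
    rw [hsupp, List.dropLast_concat]
    exact support_getLast? _
  have h1 := key n h hn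
  have h2 := key n' h' hn'
  rw [h1] at h2
  exact Option.some.inj h2

lemma IsPath.concat' {u v w : V} {p : G.Walk u v} (hp : p.IsPath) (h : G.Adj v w)
    (hw : w ∉ p.support) : (p.concat h).IsPath := by
  have h1 : (Walk.cons h.symm p.reverse).IsPath := by
    rw [Walk.cons_isPath_iff]
    exact ⟨hp.reverse, by rwa [Walk.support_reverse, List.mem_reverse]⟩
  have h2 : (Walk.cons h.symm p.reverse).reverse = p.concat h := by
    rw [Walk.reverse_cons, Walk.reverse_reverse, Walk.concat_eq_append]
  exact h2 ▸ h1.reverse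

lemma exists_extension [Fintype V] (hG : G.IsAcyclic) :
    ∀ (k : ℕ) {u w : V} (p : G.Walk u w), p.IsPath → Fintype.card V - p.length ≤ k →
    ∃ (w' : V) (q : G.Walk u w') (r : G.Walk w w'),
      q = p.append r ∧ q.IsPath ∧ (G.neighborSet w').ncard ≤ 1 := by
  classical
  intro k
  induction k with
  | zero =>
    intro u w p hp hk
    exact absurd hp.length_lt (by omega)
  | succ k ih =>
    intro u w p hp hk
    by_cases hdeg : (G.neighborSet w).ncard ≤ 1
    · exact ⟨w, p, Walk.nil, by simp, hp, hdeg⟩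
    · push_neg at hdeg
      have hex : ∃ n, G.Adj w n ∧ n ∉ p.support := by
        by_contra hcon
        push_neg at hcon
        obtain ⟨x, y, hx, hy, hxy⟩ := (Set.one_lt_ncard_iff (Set.toFinite _)).mp hdeg
        exact hxy (neighbor_mem_support_unique hG hp hx hy
          (hcon x hx) (hcon y hy))
      obtain ⟨n, hadj, hns⟩ := hex
      have hq' : (p.concat hadj).IsPath := IsPath.concat' hp hadj hns
      have hlen : Fintype.card V - (p.concat hadj).length ≤ k := by
        have := hp.length_lt
        rw [Walk.length_concat]
        omega
      obtain ⟨w', q, r, hqe, hqp, hw'⟩ := ih (p.concat hadj) hq' hlen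
      refine ⟨w', q, (Walk.cons hadj Walk.nil).append r, ?_, hqp, hw'⟩
      rw [hqe, Walk.concat_eq_append, Walk.append_assoc]

end PhyloAux
namespace PhyloAux2
open SimpleGraph PhyloAux

lemma leaf_ne {α : Type} {X : Finset α} (T : PhyloTree X) {x y : α}
    (hx : x ∈ X) (hy : y ∈ X) (hxy : x ≠ y) : T.leaf x ≠ T.leaf y :=
  fun h => hxy (T.leaf_inj x hx y hy h)

lemma cherry_resolves {α : Type} {X : Finset α} (T : PhyloTree X)
    {a b c d : α} (ha : a ∈ X) (hb : b ∈ X) (hc : c ∈ X) (hd : d ∈ X)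
    (hab : a ≠ b) (hac : a ≠ c) (had : a ≠ d) (hbc : b ≠ c) (hbd : b ≠ d) (hcd : c ≠ d)
    (hch : T.IsCherry a b) : T.ResolvesAs a b c d := by
  classical
  haveI := T.fintypeV
  obtain ⟨v, hav, hbv⟩ := hch
  have hlab := leaf_ne T ha hb hab
  have hlac := leaf_ne T ha hc hac
  have hlad := leaf_ne T ha hd had
  have hlbc := leaf_ne T hb hc hbc
  have hlbd := leaf_ne T hb hd hbd
  have hlcd := leaf_ne T hc hd hcd
  have hdeg2v : 2 ≤ (T.G.neighborSet v).ncard :=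
    two_le_ncard hav.symm hbv.symm hlab (Set.toFinite _)
  -- path from a to b through v
  set p : T.G.Walk (T.leaf a) (T.leaf b) := Walk.cons hav (Walk.cons hbv.symm Walk.nil) with hpdef
  have hp : p.IsPath := by
    rw [hpdef]
    simp [Walk.isPath_def, hav.ne, hlab, hbv.ne']
  obtain ⟨q, hq⟩ : ∃ q : T.G.Walk (T.leaf c) (T.leaf d), q.IsPath :=
    ⟨((T.connected (T.leaf c) (T.leaf d)).some.toPath : T.G.Path _ _).1,
      ((T.connected (T.leaf c) (T.leaf d)).some.toPath).2⟩
  refine ⟨p, q, hp, hq, ?_⟩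
  -- leaves a, b are not on q
  have hnotleaf : ∀ x ∈ X, x ≠ c → x ≠ d → T.leaf x ∉ q.support := by
    intro x hx hxc hxd hmem
    obtain ⟨n₁, n₂, hne, h₁, h₂, _, _⟩ :=
      internal_two_neighbors hq hmem (leaf_ne T hx hc hxc) (leaf_ne T hx hd hxd)
    have h2 : 2 ≤ (T.G.neighborSet (T.leaf x)).ncard :=
      two_le_ncard h₁ h₂ hne (Set.toFinite _)
    rw [T.leaf_degree x hx] at h2
    omega
  have hlaq : T.leaf a ∉ q.support := hnotleaf a ha hac had
  have hlbq : T.leaf b ∉ q.support := hnotleaf b hb hbc hbd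
  have hvlc : v ≠ T.leaf c := by
    intro h
    rw [h, T.leaf_degree c hc] at hdeg2v
    omega
  have hvld : v ≠ T.leaf d := by
    intro h
    rw [h, T.leaf_degree d hd] at hdeg2v
    omega
  have hvq : v ∉ q.support := by
    intro hmem
    obtain ⟨n₁, n₂, hne, h₁, h₂, hn₁, hn₂⟩ := internal_two_neighbors hq hmem hvlc hvld
    have hvnotleaf : ∀ x ∈ X, T.leaf x ≠ v := by
      intro x hx hxv
      have := T.leaf_degree x hx
      rw [hxv] at this
      omega
    have hdeg3 := T.internal_degree v hvnotleaf
    have hn₁a : n₁ ≠ T.leaf a := fun h => hlaq (h ▸ hn₁)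
    have hn₁b : n₁ ≠ T.leaf b := fun h => hlbq (h ▸ hn₁)
    have hn₂a : n₂ ≠ T.leaf a := fun h => hlaq (h ▸ hn₂)
    have hn₂b : n₂ ≠ T.leaf b := fun h => hlbq (h ▸ hn₂)
    have hsub : ({T.leaf a, T.leaf b, n₁, n₂} : Set T.V) ⊆ T.G.neighborSet v := by
      intro y hy
      simp only [Set.mem_insert_iff, Set.mem_singleton_iff] at hy
      rcases hy with rfl | rfl | rfl | rfl
      exacts [hav.symm, hbv.symm, h₁, h₂]
    have hcard : ({T.leaf a, T.leaf b, n₁, n₂} : Set T.V).ncard = 4 := by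
      rw [Set.ncard_insert_of_notMem (by simp [hlab, hn₁a.symm, hn₂a.symm]) (Set.toFinite _),
        Set.ncard_insert_of_notMem (by simp [hn₁b.symm, hn₂b.symm]) (Set.toFinite _),
        Set.ncard_pair hne]
    have h4 : 4 ≤ (T.G.neighborSet v).ncard := by
      rw [← hcard]
      exact Set.ncard_le_ncard hsub (Set.toFinite _)
    omega
  intro u hu
  rw [hpdef] at hu
  simp only [Walk.support_cons, Walk.support_nil, List.mem_cons,
    List.not_mem_nil, or_false] at hu
  rcases hu with rfl | rfl | rfl
  exacts [hlaq, hvq, hlbq]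

end PhyloAux2
namespace PhyloAux2
open SimpleGraph PhyloAux

lemma cherry_imp {α : Type} [DecidableEq α] {X : Finset α} (hX : 4 ≤ X.card)
    {S : Set (Finset α)} (hfour : FourWayPartitionProperty X S)
    (T T' : PhyloTree X)
    (hres : ∀ q ∈ QSet S, PhyloTree.ResolveIdentically T T' q)
    {a b : α} (ha : a ∈ X) (hb : b ∈ X) (hab : a ≠ b)
    (hch : T.IsCherry a b) : T'.IsCherry a b := by
  classical
  haveI := T'.fintypeV
  by_contra hch'
  have hlab : T'.leaf a ≠ T'.leaf b := leaf_ne T' ha hb hab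
  -- leaves a and b are not adjacent in T'
  have hnadj : ¬ T'.G.Adj (T'.leaf a) (T'.leaf b) := by
    intro hadj
    have hcardab : (X \ {a, b}).Nonempty := by
      rw [← Finset.card_pos]
      have h1 : X.card ≤ (X \ {a, b}).card + ({a, b} : Finset α).card :=
        Finset.card_le_card_sdiff_add_card
      have h2 : ({a, b} : Finset α).card ≤ 2 :=
        (Finset.card_insert_le _ _).trans (by simp)
      omega
    obtain ⟨c, hcmem⟩ := hcardab
    rw [Finset.mem_sdiff, Finset.mem_insert, Finset.mem_singleton] at hcmem
    obtain ⟨hcX, hcne⟩ := hcmem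
    have hca : c ≠ a := fun h => hcne (Or.inl h)
    have hcb : c ≠ b := fun h => hcne (Or.inr h)
    have hNa : T'.G.neighborSet (T'.leaf a) = {T'.leaf b} := by
      obtain ⟨x, hx⟩ := Set.ncard_eq_one.mp (T'.leaf_degree a ha)
      have hmem : T'.leaf b ∈ T'.G.neighborSet (T'.leaf a) := hadj
      rw [hx] at hmem ⊢
      rw [Set.mem_singleton_iff] at hmem
      rw [hmem]
    have hNb : T'.G.neighborSet (T'.leaf b) = {T'.leaf a} := by
      obtain ⟨x, hx⟩ := Set.ncard_eq_one.mp (T'.leaf_degree b hb)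
      have hmem : T'.leaf a ∈ T'.G.neighborSet (T'.leaf b) := hadj.symm
      rw [hx] at hmem ⊢
      rw [Set.mem_singleton_iff] at hmem
      rw [hmem]
    obtain ⟨r, hr⟩ : ∃ r : T'.G.Walk (T'.leaf c) (T'.leaf a), r.IsPath :=
      ⟨((T'.connected _ _).some.toPath).1, ((T'.connected _ _).some.toPath).2⟩
    have hlca : T'.leaf a ≠ T'.leaf c := leaf_ne T' ha hcX (Ne.symm hca)
    obtain ⟨m, hm, rr, hrr⟩ := r.reverse.exists_eq_cons_of_ne hlca
    have hmb : m = T'.leaf b := by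
      have hmem : m ∈ T'.G.neighborSet (T'.leaf a) := hm
      rwa [hNa, Set.mem_singleton_iff] at hmem
    subst hmb
    have hrp : r.reverse.IsPath := hr.reverse
    rw [hrr, Walk.cons_isPath_iff] at hrp
    obtain ⟨hrrp, hlarr⟩ := hrp
    have hlbc : T'.leaf b ≠ T'.leaf c := leaf_ne T' hb hcX (Ne.symm hcb)
    obtain ⟨m₂, hm₂, rr₂, hrr₂⟩ := rr.exists_eq_cons_of_ne hlbc
    have hm₂a : m₂ = T'.leaf a := by
      have hmem : m₂ ∈ T'.G.neighborSet (T'.leaf b) := hm₂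
      rwa [hNb, Set.mem_singleton_iff] at hmem
    subst hm₂a
    exact hlarr (by rw [hrr₂]; simp)
  -- unique path from leaf a to leaf b in T'
  obtain ⟨p, hp⟩ : ∃ p : T'.G.Walk (T'.leaf a) (T'.leaf b), p.IsPath :=
    ⟨((T'.connected _ _).some.toPath).1, ((T'.connected _ _).some.toPath).2⟩
  obtain ⟨v1, h1, p₂, hpe⟩ := p.exists_eq_cons_of_ne hlab
  subst hpe
  have hp0 := hp
  rw [Walk.cons_isPath_iff] at hp
  obtain ⟨hp₂, hlap₂⟩ := hp
  have hv1lb : v1 ≠ T'.leaf b := fun h => hnadj (h ▸ h1)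
  obtain ⟨v2, h2, p₃, hpe₂⟩ := p₂.exists_eq_cons_of_ne hv1lb
  subst hpe₂
  rw [Walk.cons_isPath_iff] at hp₂
  obtain ⟨hp₃, hv1p₃⟩ := hp₂
  have hv2lb : v2 ≠ T'.leaf b := by
    intro h
    subst h
    exact hch' ⟨v1, h1, h2.symm⟩
  obtain ⟨v3, h3, p₄, hpe₃⟩ := p₃.exists_eq_cons_of_ne hv2lb
  subst hpe₃
  simp only [Walk.support_cons, List.mem_cons] at hlap₂
  push_neg at hlap₂
  obtain ⟨hlav1, hlav2, hlap₄⟩ := hlap₂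
  have hv1v2 : v1 ≠ v2 := h2.ne
  have hv1v3 : v1 ≠ v3 := by
    intro h
    exact hv1p₃ (by rw [h]; simp [Walk.start_mem_support])
  -- the graph with the internal edge (v1, v2) removed
  set G' := T'.G.deleteEdges {s(v1, v2)} with hG'def
  have hG'adj : ∀ {x y : T'.V}, T'.G.Adj x y → s(x, y) ≠ s(v1, v2) → G'.Adj x y := by
    intro x y hxy hne
    rw [hG'def, SimpleGraph.deleteEdges_adj]
    exact ⟨hxy, by simpa using hne⟩
  have htransfer : ∀ {x y : T'.V} (q : T'.G.Walk x y),
      (v1 ∉ q.support ∨ v2 ∉ q.support) → ∀ e ∈ q.edges, e ∈ G'.edgeSet := by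
    intro x y q hq e he
    rw [hG'def, SimpleGraph.edgeSet_deleteEdges]
    refine ⟨q.edges_subset_edgeSet he, ?_⟩
    simp only [Set.mem_singleton_iff]
    rintro rfl
    rcases hq with h | h
    · exact h (q.fst_mem_support_of_mem_edges he)
    · exact h (q.snd_mem_support_of_mem_edges he)
  have havoid : ∀ {x y : T'.V} (q : T'.G.Walk x y),
      (v1 ∉ q.support ∨ v2 ∉ q.support) → G'.Reachable x y := by
    intro x y q hq
    exact ⟨q.transfer G' (htransfer q hq)⟩
  have hup : ∀ {x y : T'.V} (q : G'.Walk x y), ∀ e ∈ q.edges, e ∈ T'.G.edgeSet := by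
    intro x y q e he
    have h := q.edges_subset_edgeSet he
    rw [hG'def, SimpleGraph.edgeSet_deleteEdges] at h
    exact h.1
  have hnr : ¬ G'.Reachable v1 v2 := by
    intro hreach
    obtain ⟨r0⟩ := hreach
    obtain ⟨r, hrp⟩ : ∃ r : G'.Walk v1 v2, r.IsPath := ⟨r0.toPath.1, r0.toPath.2⟩
    have hedge : ¬ s(v2, v1) ∈ (r.transfer T'.G (hup r)).edges := by
      rw [Walk.edges_transfer]
      intro hmem
      have h := r.edges_subset_edgeSet hmem
      rw [hG'def, SimpleGraph.edgeSet_deleteEdges] at h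
      exact h.2 (by rw [Sym2.eq_swap]; exact rfl)
    exact T'.acyclic _
      ((Walk.cons_isCycle_iff _ h2.symm).mpr ⟨hrp.transfer _, hedge⟩)
  have hG'ac : G'.IsAcyclic := by
    intro v c hc
    exact T'.acyclic (c.transfer T'.G (hup c)) (hc.transfer _)
  have hG'la : G'.Adj (T'.leaf a) v1 := by
    refine hG'adj h1 ?_
    intro hco
    rw [Sym2.eq_iff] at hco
    rcases hco with ⟨h, h'⟩ | ⟨h, h'⟩
    exacts [hv1v2 h', hlav2 h]
  have hreach_a : G'.Reachable (T'.leaf a) v1 := hG'la.reachable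
  have hreach_b : G'.Reachable (T'.leaf b) v2 :=
    (havoid (Walk.cons h3 p₄) (Or.inl hv1p₃)).symm
  -- every leaf lies on one of the two sides
  have hside : ∀ x ∈ X, G'.Reachable (T'.leaf x) v1 ∨ G'.Reachable (T'.leaf x) v2 := by
    intro x hx
    obtain ⟨q, hq⟩ : ∃ q : T'.G.Walk (T'.leaf x) v1, q.IsPath :=
      ⟨((T'.connected _ _).some.toPath).1, ((T'.connected _ _).some.toPath).2⟩
    by_cases hmem : v2 ∈ q.support
    · right
      have hv1nt : v1 ∉ (q.takeUntil v2 hmem).support := by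
        have hspec : q.support
            = (q.takeUntil v2 hmem).support ++ (q.dropUntil v2 hmem).support.tail := by
          rw [← Walk.support_append, Walk.take_spec]
        have hnd := hq.support_nodup
        rw [hspec] at hnd
        have hdisj := (List.nodup_append'.mp hnd).2.2
        intro hin
        exact hdisj hin
          (Walk.end_mem_tail_support_of_ne (Ne.symm hv1v2) (q.dropUntil v2 hmem))
      exact havoid (q.takeUntil v2 hmem) (Or.inl hv1nt)
    · left
      exact havoid q (Or.inr hmem)
  -- v1 and v2 are internal vertices of degree 3
  have hinternal : ∀ (v : T'.V) {y z : T'.V}, T'.G.Adj v y → T'.G.Adj v z → y ≠ z →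
      (T'.G.neighborSet v).ncard = 3 := by
    intro v y z hy hz hyz
    have h2le : 2 ≤ (T'.G.neighborSet v).ncard := two_le_ncard hy hz hyz (Set.toFinite _)
    refine T'.internal_degree v ?_
    intro x hx hxv
    have hdx := T'.leaf_degree x hx
    rw [hxv] at hdx
    omega
  have hdegv1 : (T'.G.neighborSet v1).ncard = 3 := hinternal v1 h1.symm h2 hlav2
  have hdegv2 : (T'.G.neighborSet v2).ncard = 3 := hinternal v2 h2.symm h3 hv1v3
  have hthird : ∀ (v y z : T'.V), (T'.G.neighborSet v).ncard = 3 →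
      ∃ w, T'.G.Adj v w ∧ w ≠ y ∧ w ≠ z := by
    intro v y z hdeg
    by_contra hcon
    push_neg at hcon
    have hsub : T'.G.neighborSet v ⊆ {y, z} := by
      intro w hw
      by_cases hwy : w = y
      · simp [hwy]
      · simp [hcon w hw hwy]
    have hle2 := Set.ncard_le_ncard hsub (Set.toFinite _)
    have hp2 : ({y, z} : Set T'.V).ncard ≤ 2 :=
      (Set.ncard_insert_le _ _).trans (by simp)
    omega
  -- === side of v1: find a label c ≠ a, b reachable to v1 in G' ===
  obtain ⟨z1, hz1a, hz1la, hz1v2⟩ := hthird v1 (T'.leaf a) v2 hdegv1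
  have hz1G' : G'.Adj v1 z1 := by
    refine hG'adj hz1a ?_
    intro hco
    rw [Sym2.eq_iff] at hco
    rcases hco with ⟨h, h'⟩ | ⟨h, h'⟩
    exacts [hz1v2 h', hv1v2 h]
  have hs1 : (Walk.cons hz1G' (Walk.nil : G'.Walk z1 z1)).IsPath := by
    simp [Walk.isPath_def, hz1G'.ne]
  obtain ⟨w, q, r, hqe, hqp, hwdeg⟩ :=
    exists_extension hG'ac (Fintype.card T'.V) _ hs1 (by omega)
  rw [Walk.cons_append, Walk.nil_append] at hqe
  subst hqe
  have hqp' := hqp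
  rw [Walk.cons_isPath_iff] at hqp'
  obtain ⟨hrp, hv1r⟩ := hqp'
  have hwv1 : w ≠ v1 := fun h => hv1r (h ▸ r.end_mem_support)
  have hreach_w : G'.Reachable v1 w := ⟨Walk.cons hz1G' r⟩
  have hwv2 : w ≠ v2 := fun h => hnr (h ▸ hreach_w)
  have hwlb : w ≠ T'.leaf b := by
    intro h
    exact hnr ((h ▸ hreach_w).trans hreach_b)
  have hwla : w ≠ T'.leaf a := by
    intro h
    subst h
    have hu := isAcyclic_iff_path_unique.mp hG'ac
      (⟨Walk.cons hz1G' r, hqp⟩ : G'.Path v1 (T'.leaf a))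
      ⟨Walk.cons hG'la.symm Walk.nil, by simp [Walk.isPath_def, Ne.symm hlav1]⟩
    have hsup := congrArg (fun (P : G'.Path v1 (T'.leaf a)) => P.1.support) hu
    simp only [Walk.support_cons, Walk.support_nil] at hsup
    have hrs : r.support = [T'.leaf a] := by
      injection hsup
    have hz1head : r.support = z1 :: r.support.tail := r.support_eq_cons
    rw [hrs] at hz1head
    injection hz1head with h1' h2'
    exact hz1la h1'.symm
  have hNw : T'.G.neighborSet w = G'.neighborSet w := by
    ext y
    simp only [SimpleGraph.mem_neighborSet, hG'def, SimpleGraph.deleteEdges_adj,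
      Set.mem_singleton_iff]
    constructor
    · intro h
      refine ⟨h, ?_⟩
      intro hco
      rw [Sym2.eq_iff] at hco
      rcases hco with ⟨ha', hb'⟩ | ⟨ha', hb'⟩
      exacts [hwv1 ha', hwv2 ha']
    · exact fun h => h.1
  have hwdeg1 : (T'.G.neighborSet w).ncard = 1 := by
    rw [hNw]
    have hpos : (G'.neighborSet w).Nonempty := by
      obtain ⟨m, hm, rr, hrr⟩ :=
        (Walk.cons hz1G' r).reverse.exists_eq_cons_of_ne hwv1
      exact ⟨m, hm⟩
    have h1le := (Set.ncard_pos (Set.toFinite _)).mpr hpos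
    omega
  obtain ⟨c, hcX, hlc⟩ := T'.degree_one_is_leaf w hwdeg1
  have hca : c ≠ a := by
    intro h
    rw [h] at hlc
    exact hwla hlc.symm
  have hcb : c ≠ b := by
    intro h
    rw [h] at hlc
    exact hwlb hlc.symm
  have hreach_c : G'.Reachable (T'.leaf c) v1 := by
    rw [hlc]; exact hreach_w.symm
  -- === side of v2: find a label d ≠ a, b reachable to v2 in G' ===
  obtain ⟨z2, hz2a, hz2v1, hz2v3⟩ := hthird v2 v1 v3 hdegv2
  have hz2G' : G'.Adj v2 z2 := by
    refine hG'adj hz2a ?_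
    intro hco
    rw [Sym2.eq_iff] at hco
    rcases hco with ⟨h, h'⟩ | ⟨h, h'⟩
    exacts [hv1v2 h.symm, hz2v1 h']
  have hs2 : (Walk.cons hz2G' (Walk.nil : G'.Walk z2 z2)).IsPath := by
    simp [Walk.isPath_def, hz2G'.ne]
  obtain ⟨w₂, q₂, r₂, hq₂e, hq₂p, hw₂deg⟩ :=
    exists_extension hG'ac (Fintype.card T'.V) _ hs2 (by omega)
  rw [Walk.cons_append, Walk.nil_append] at hq₂e
  subst hq₂e
  have hq₂p' := hq₂p
  rw [Walk.cons_isPath_iff] at hq₂p'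
  obtain ⟨hr₂p, hv2r₂⟩ := hq₂p'
  have hw₂v2 : w₂ ≠ v2 := fun h => hv2r₂ (h ▸ r₂.end_mem_support)
  have hreach_w₂ : G'.Reachable v2 w₂ := ⟨Walk.cons hz2G' r₂⟩
  have hw₂v1 : w₂ ≠ v1 := fun h => hnr ((h ▸ hreach_w₂)).symm
  have hw₂la : w₂ ≠ T'.leaf a := by
    intro h
    exact hnr (((h ▸ hreach_w₂).trans hreach_a)).symm
  have hw₂lb : w₂ ≠ T'.leaf b := by
    intro h
    subst h
    have hp₃' : ((Walk.cons h3 p₄).transfer G'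
        (htransfer _ (Or.inl hv1p₃))).IsPath := hp₃.transfer _
    have hu := isAcyclic_iff_path_unique.mp hG'ac
      (⟨Walk.cons hz2G' r₂, hq₂p⟩ : G'.Path v2 (T'.leaf b)) ⟨_, hp₃'⟩
    have hsup := congrArg (fun (P : G'.Path v2 (T'.leaf b)) => P.1.support) hu
    simp only [Walk.support_transfer, Walk.support_cons] at hsup
    injection hsup with h1' h2'
    have hz2head : r₂.support = z2 :: r₂.support.tail := r₂.support_eq_cons
    have hv3head : p₄.support = v3 :: p₄.support.tail := p₄.support_eq_cons
    rw [hz2head, hv3head] at h2'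
    injection h2' with h3' h4'
    exact hz2v3 h3'
  have hNw₂ : T'.G.neighborSet w₂ = G'.neighborSet w₂ := by
    ext y
    simp only [SimpleGraph.mem_neighborSet, hG'def, SimpleGraph.deleteEdges_adj,
      Set.mem_singleton_iff]
    constructor
    · intro h
      refine ⟨h, ?_⟩
      intro hco
      rw [Sym2.eq_iff] at hco
      rcases hco with ⟨ha', hb'⟩ | ⟨ha', hb'⟩
      exacts [hw₂v1 ha', hw₂v2 ha']
    · exact fun h => h.1
  have hw₂deg1 : (T'.G.neighborSet w₂).ncard = 1 := by
    rw [hNw₂]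
    have hpos : (G'.neighborSet w₂).Nonempty := by
      obtain ⟨m, hm, rr, hrr⟩ :=
        (Walk.cons hz2G' r₂).reverse.exists_eq_cons_of_ne hw₂v2
      exact ⟨m, hm⟩
    have h1le := (Set.ncard_pos (Set.toFinite _)).mpr hpos
    omega
  obtain ⟨d, hdX, hld⟩ := T'.degree_one_is_leaf w₂ hw₂deg1
  have hda : d ≠ a := by
    intro h
    rw [h] at hld
    exact hw₂la hld.symm
  have hdb : d ≠ b := by
    intro h
    rw [h] at hld
    exact hw₂lb hld.symm
  have hreach_d : G'.Reachable (T'.leaf d) v2 := by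
    rw [hld]; exact hreach_w₂.symm
  have hnreach_d : ¬ G'.Reachable (T'.leaf d) v1 := by
    intro h
    exact hnr (h.symm.trans hreach_d)
  -- === the four-way partition ===
  set A3 := X.filter (fun x => x ≠ a ∧ x ≠ b ∧ G'.Reachable (T'.leaf x) v1) with hA3
  set A4 := X.filter (fun x => x ≠ a ∧ x ≠ b ∧ ¬ G'.Reachable (T'.leaf x) v1) with hA4
  have hcA3 : c ∈ A3 := by
    rw [hA3, Finset.mem_filter]
    exact ⟨hcX, hca, hcb, hreach_c⟩
  have hdA4 : d ∈ A4 := by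
    rw [hA4, Finset.mem_filter]
    exact ⟨hdX, hda, hdb, hnreach_d⟩
  have hd12 : Disjoint ({a} : Finset α) ({b} : Finset α) := by
    simp [Finset.disjoint_left, hab]
  have hd13 : Disjoint ({a} : Finset α) A3 := by
    rw [Finset.disjoint_left]
    intro x hx hx3
    rw [Finset.mem_singleton] at hx
    rw [hA3, Finset.mem_filter] at hx3
    exact hx3.2.1 hx
  have hd14 : Disjoint ({a} : Finset α) A4 := by
    rw [Finset.disjoint_left]
    intro x hx hx4
    rw [Finset.mem_singleton] at hx
    rw [hA4, Finset.mem_filter] at hx4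
    exact hx4.2.1 hx
  have hd23 : Disjoint ({b} : Finset α) A3 := by
    rw [Finset.disjoint_left]
    intro x hx hx3
    rw [Finset.mem_singleton] at hx
    rw [hA3, Finset.mem_filter] at hx3
    exact hx3.2.2.1 hx
  have hd24 : Disjoint ({b} : Finset α) A4 := by
    rw [Finset.disjoint_left]
    intro x hx hx4
    rw [Finset.mem_singleton] at hx
    rw [hA4, Finset.mem_filter] at hx4
    exact hx4.2.2.1 hx
  have hd34 : Disjoint A3 A4 := by
    rw [Finset.disjoint_left]
    intro x hx3 hx4
    rw [hA3, Finset.mem_filter] at hx3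
    rw [hA4, Finset.mem_filter] at hx4
    exact hx4.2.2.2 hx3.2.2.2
  have hunion : ({a} : Finset α) ∪ {b} ∪ A3 ∪ A4 = X := by
    ext x
    simp only [Finset.mem_union, Finset.mem_singleton, hA3, hA4, Finset.mem_filter]
    constructor
    · rintro (((rfl | rfl) | h) | h)
      exacts [ha, hb, h.1, h.1]
    · intro hx
      by_cases hxa : x = a
      · exact Or.inl (Or.inl (Or.inl hxa))
      by_cases hxb : x = b
      · exact Or.inl (Or.inl (Or.inr hxb))
      by_cases hr' : G'.Reachable (T'.leaf x) v1
      · exact Or.inl (Or.inr ⟨hx, hxa, hxb, hr'⟩)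
      · exact Or.inr ⟨hx, hxa, hxb, hr'⟩
  obtain ⟨a1, ha1, a2, ha2, c', hc', d', hd', hquart⟩ :=
    hfour {a} {b} A3 A4 ⟨a, Finset.mem_singleton_self a⟩ ⟨b, Finset.mem_singleton_self b⟩
      ⟨c, hcA3⟩ ⟨d, hdA4⟩ hd12 hd13 hd14 hd23 hd24 hd34 hunion
  rw [Finset.mem_singleton] at ha1 ha2
  rw [ha1, ha2] at hquart
  rw [hA3, Finset.mem_filter] at hc'
  rw [hA4, Finset.mem_filter] at hd'
  obtain ⟨hc'X, hc'a, hc'b, hc'reach⟩ := hc'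
  obtain ⟨hd'X, hd'a, hd'b, hd'nreach⟩ := hd'
  have hd'reach : G'.Reachable (T'.leaf d') v2 := (hside d' hd'X).resolve_left hd'nreach
  have hc'd' : c' ≠ d' := by
    intro h
    exact hd'nreach (h ▸ hc'reach)
  have hTres : T.ResolvesAs a b c' d' :=
    cherry_resolves T ha hb hc'X hd'X hab (Ne.symm hc'a) (Ne.symm hd'a)
      (Ne.symm hc'b) (Ne.symm hd'b) hc'd' hch
  have hT'res : T'.ResolvesAs a b c' d' := (hres _ hquart a b c' d' rfl).mp hTres
  obtain ⟨P, Q, hPp, hQp, hdisj⟩ := hT'res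
  have hPeq : P = Walk.cons h1 (Walk.cons h2 (Walk.cons h3 p₄)) := by
    have hu := isAcyclic_iff_path_unique.mp T'.acyclic
      (⟨P, hPp⟩ : T'.G.Path _ _) ⟨_, hp0⟩
    exact congrArg Subtype.val hu
  have hv1P : v1 ∈ P.support := by rw [hPeq]; simp
  have hv1Q : v1 ∈ Q.support := by
    by_contra hno
    have hreachQ : G'.Reachable (T'.leaf c') (T'.leaf d') := havoid Q (Or.inl hno)
    exact hnr (hc'reach.symm.trans (hreachQ.trans hd'reach))
  exact hdisj v1 hv1P hv1Q

end PhyloAux2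
/-- under the four-way partition property, two trees resolving every
quartet of `Q_S` identically have exactly the same cherries. -/
theorem cherry_iff_cherry {α : Type} [DecidableEq α]
    (X : Finset α) (hX : 4 ≤ X.card)
    (S : Set (Finset α)) (hS : ∀ Y ∈ S, Y ⊆ X)
    (hfour : FourWayPartitionProperty X S)
    (T T' : PhyloTree X)
    (hres : ∀ q ∈ QSet S, PhyloTree.ResolveIdentically T T' q)
    (a b : α) (ha : a ∈ X) (hb : b ∈ X) (hab : a ≠ b) :
    T.IsCherry a b ↔ T'.IsCherry a b := by
  constructor
  · exact fun h => PhyloAux2.cherry_imp hX hfour T T' hres ha hb hab h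
  · refine fun h => PhyloAux2.cherry_imp hX hfour T' T ?_ ha hb hab h
    intro q hq a' b' c' d' he
    exact (hres q hq a' b' c' d' he).symm
end

section
/- Let X be a finite set with |X| ≥ 4, and let T and T' be binary phylogenetic X-trees. If T and T' resolve every 4-element subset of X identically, then T and T' are label-isomorphic. -/
set_option linter.unusedSectionVars false

namespace PhyloAux

open SimpleGraph Walk

variable {V : Type} [DecidableEq V] {G : SimpleGraph V}

noncomputable def pth (hc : G.Connected) (a b : V) : G.Walk a b :=
  ((hc a b).some).bypass

lemma pth_isPath (hc : G.Connected) (a b : V) : (pth hc a b).IsPath :=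
  Walk.bypass_isPath _

variable (hc : G.Connected) (ha : G.IsAcyclic)
include hc ha

lemma path_eq {a b : V} {p : G.Walk a b} (hp : p.IsPath) : p = pth hc a b := by
  have := ha.path_unique ⟨p, hp⟩ ⟨pth hc a b, pth_isPath hc a b⟩
  exact congrArg Subtype.val this

/-- `v` lies on the unique path from `a` to `b`. -/
def onP (a b v : V) : Prop := v ∈ (pth hc a b).support

lemma onP_left (a b : V) : onP hc a b a := Walk.start_mem_support _
lemma onP_right (a b : V) : onP hc a b b := Walk.end_mem_support _

lemma pth_self (a : V) : pth hc a a = Walk.nil := (path_eq hc ha Walk.IsPath.nil).symm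

lemma onP_self {a v : V} : onP hc a a v ↔ v = a := by
  rw [onP, pth_self hc ha, Walk.support_nil, List.mem_singleton]

lemma pth_reverse (a b : V) : (pth hc a b).reverse = pth hc b a :=
  path_eq hc ha ((pth_isPath hc a b).reverse)

lemma onP_symm {a b v : V} (h : onP hc a b v) : onP hc b a v := by
  rw [onP, ← pth_reverse hc ha, Walk.support_reverse, List.mem_reverse]
  exact h

lemma onP_comm {a b v : V} : onP hc a b v ↔ onP hc b a v :=
  ⟨onP_symm hc ha, onP_symm hc ha⟩

lemma takeUntil_eq {a b v : V} (h : v ∈ (pth hc a b).support) :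
    (pth hc a b).takeUntil v h = pth hc a v :=
  path_eq hc ha ((pth_isPath hc a b).takeUntil h)

lemma dropUntil_eq {a b v : V} (h : v ∈ (pth hc a b).support) :
    (pth hc a b).dropUntil v h = pth hc v b :=
  path_eq hc ha ((pth_isPath hc a b).dropUntil h)

lemma pth_append {a b v : V} (h : onP hc a b v) :
    pth hc a b = (pth hc a v).append (pth hc v b) := by
  conv_lhs => rw [← Walk.take_spec (pth hc a b) h]
  rw [takeUntil_eq hc ha h, dropUntil_eq hc ha h]

lemma onP_cases {a b v u : V} (h : onP hc a b v) (hu : onP hc a b u) :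
    onP hc a v u ∨ onP hc v b u := by
  rw [onP, pth_append hc ha h, Walk.support_append] at hu
  rcases List.mem_append.mp hu with h1 | h1
  · exact Or.inl h1
  · exact Or.inr (List.mem_of_mem_tail h1)

lemma onP_of_left {a b v u : V} (h : onP hc a b v) (h1 : onP hc a v u) : onP hc a b u := by
  rw [onP, pth_append hc ha h, Walk.support_append]
  exact List.mem_append.mpr (Or.inl h1)

lemma onP_of_right {a b v u : V} (h : onP hc a b v) (h1 : onP hc v b u) : onP hc a b u := by
  rw [onP, Walk.support_eq_cons] at h1
  rcases List.eq_or_mem_of_mem_cons h1 with h2 | h2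
  · subst h2; exact h
  · rw [onP, pth_append hc ha h, Walk.support_append]
    exact List.mem_append.mpr (Or.inr h2)

lemma onP_mid {a b v u : V} (h : onP hc a b v) (h1 : onP hc a v u) (h2 : onP hc v b u) :
    u = v := by
  by_contra hne
  have hnd : (pth hc a b).support.Nodup := (pth_isPath hc a b).support_nodup
  rw [pth_append hc ha h, Walk.support_append, List.nodup_append] at hnd
  have h2' : u ∈ (pth hc v b).support.tail := by
    rw [onP, Walk.support_eq_cons] at h2
    rcases List.eq_or_mem_of_mem_cons h2 with h3 | h3
    · exact absurd h3 hne
    · exact h3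
  exact hnd.2.2 u h1 u h2' rfl

lemma onP_glue {b m c : V} (h : ∀ u, onP hc b m u → onP hc m c u → u = m) : onP hc b c m := by
  have hnd2 := (pth_isPath hc m c).support_nodup
  rw [Walk.support_eq_cons (pth hc m c)] at hnd2
  have hp : ((pth hc b m).append (pth hc m c)).IsPath := by
    rw [Walk.isPath_def, Walk.support_append, List.nodup_append]
    refine ⟨(pth_isPath hc b m).support_nodup, (List.nodup_cons.mp hnd2).2, ?_⟩
    intro u hu1 u' hu2 heq
    rw [← heq] at hu2
    have hu2' : u ∈ (pth hc m c).support := by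
      rw [Walk.support_eq_cons (pth hc m c)]
      exact List.mem_cons_of_mem _ hu2
    have := h u hu1 hu2'
    subst this
    exact (List.nodup_cons.mp hnd2).1 hu2
  have := path_eq hc ha hp
  rw [onP, ← this, Walk.support_append]
  exact List.mem_append.mpr (Or.inl (Walk.end_mem_support _))

lemma onP_sub {a b c u : V} (h : onP hc a c u) : onP hc a b u ∨ onP hc b c u := by
  have h1 : ((pth hc a b).append (pth hc b c)).bypass = pth hc a c :=
    path_eq hc ha (Walk.bypass_isPath _)
  rw [onP, ← h1] at h
  have h2 := Walk.support_bypass_subset _ h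
  rw [Walk.support_append] at h2
  rcases List.mem_append.mp h2 with h3 | h3
  · exact Or.inl h3
  · exact Or.inr (List.mem_of_mem_tail h3)

lemma pth_length (a b : V) : (pth hc a b).length = G.dist a b := by
  refine le_antisymm ?_ (SimpleGraph.dist_le _)
  obtain ⟨w, hw⟩ := hc.exists_walk_length_eq_dist a b
  calc (pth hc a b).length = w.bypass.length := by rw [path_eq hc ha (Walk.bypass_isPath w)]
    _ ≤ w.length := Walk.length_bypass_le w
    _ = G.dist a b := hw

lemma dist_add_onP {a b v : V} (h : onP hc a b v) :
    G.dist a v + G.dist v b = G.dist a b := by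
  have := congrArg Walk.length (pth_append hc ha h)
  rw [Walk.length_append, pth_length hc ha, pth_length hc ha, pth_length hc ha] at this
  omega

lemma eq_of_dist_zero {a b : V} (h : G.dist a b = 0) : a = b :=
  ((hc a b).dist_eq_zero_iff).mp h

lemma onP_prefix {a b m v : V} (hm : onP hc a b m) (hv : onP hc a b v)
    (hd : G.dist a v ≤ G.dist a m) : onP hc a m v := by
  rcases onP_cases hc ha hm hv with h1 | h1
  · exact h1
  · -- v on path m..b : then dist a v = dist a m + dist m v, so dist m v = 0
    have e1 := dist_add_onP hc ha h1
    have e2 := dist_add_onP hc ha hm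
    have e3 := dist_add_onP hc ha hv
    have : G.dist m v = 0 := by
      have e4 := dist_add_onP hc ha (onP_of_right hc ha hm h1)  -- a b v again; not helpful
      omega
    cases eq_of_dist_zero hc ha this
    exact onP_right hc ha a m

lemma dist_of_right {a b m u : V} (h : onP hc a b m) (h1 : onP hc m b u) :
    G.dist a u = G.dist a m + G.dist m u := by
  have e1 := dist_add_onP hc ha (onP_of_right hc ha h h1)
  have e2 := dist_add_onP hc ha h1
  have e3 := dist_add_onP hc ha h
  omega

theorem med_exists (a b c : V) : ∃ m, onP hc a b m ∧ onP hc a c m ∧ onP hc b c m ∧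
    ∀ v, onP hc a b v → onP hc a c v → onP hc a m v := by
  classical
  set s : Finset V := (pth hc a b).support.toFinset ∩ (pth hc a c).support.toFinset with hs
  have hane : a ∈ s := by
    simp only [hs, Finset.mem_inter, List.mem_toFinset]
    exact ⟨onP_left hc ha a b, onP_left hc ha a c⟩
  obtain ⟨m, hm, hmax⟩ := s.exists_max_image (G.dist a) ⟨a, hane⟩
  simp only [hs, Finset.mem_inter, List.mem_toFinset] at hm
  have h1 : onP hc a b m := hm.1
  have h2 : onP hc a c m := hm.2
  have hmax' : ∀ v, onP hc a b v → onP hc a c v → G.dist a v ≤ G.dist a m := by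
    intro v hv1 hv2
    exact hmax v (by simp only [hs, Finset.mem_inter, List.mem_toFinset]; exact ⟨hv1, hv2⟩)
  have hpre : ∀ v, onP hc a b v → onP hc a c v → onP hc a m v := fun v hv1 hv2 =>
    onP_prefix hc ha h1 hv1 (hmax' v hv1 hv2)
  refine ⟨m, h1, h2, ?_, hpre⟩
  apply onP_glue hc ha
  intro u hu1 hu2
  have hab : onP hc a b u := onP_of_right hc ha h1 (onP_symm hc ha hu1)
  have hac : onP hc a c u := onP_of_right hc ha h2 hu2
  have e1 : G.dist a u = G.dist a m + G.dist m u :=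
    dist_of_right hc ha h1 (onP_symm hc ha hu1)
  have e2 := hmax' u hab hac
  have : G.dist m u = 0 := by omega
  exact (eq_of_dist_zero hc ha this).symm

noncomputable def med (a b c : V) : V := (med_exists hc ha a b c).choose

lemma med_ab (a b c : V) : onP hc a b (med hc ha a b c) := (med_exists hc ha a b c).choose_spec.1
lemma med_ac (a b c : V) : onP hc a c (med hc ha a b c) := (med_exists hc ha a b c).choose_spec.2.1
lemma med_bc (a b c : V) : onP hc b c (med hc ha a b c) := (med_exists hc ha a b c).choose_spec.2.2.1
lemma med_pre {a b c : V} : ∀ v, onP hc a b v → onP hc a c v → onP hc a (med hc ha a b c) v :=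
  (med_exists hc ha a b c).choose_spec.2.2.2

lemma med_unique {a b c m' : V} (h1 : onP hc a b m') (h2 : onP hc a c m')
    (h3 : onP hc b c m') : m' = med hc ha a b c := by
  have hp : onP hc a (med hc ha a b c) m' := med_pre hc ha m' h1 h2
  have e0 := dist_add_onP hc ha hp
  have e1 := dist_add_onP hc ha h1
  have e2 := dist_add_onP hc ha (med_ab hc ha a b c)
  have e3 := dist_add_onP hc ha h2
  have e4 := dist_add_onP hc ha (med_ac hc ha a b c)
  have hz : G.dist m' (med hc ha a b c) = 0 := by
    rcases onP_cases hc ha (med_bc hc ha a b c) h3 with h5 | h5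
    · have e5 := dist_add_onP hc ha h5
      have c1 : G.dist b m' = G.dist m' b := SimpleGraph.dist_comm
      have c2 : G.dist b (med hc ha a b c) = G.dist (med hc ha a b c) b := SimpleGraph.dist_comm
      omega
    · have e5 := dist_add_onP hc ha h5
      have c3 : G.dist (med hc ha a b c) m' = G.dist m' (med hc ha a b c) := SimpleGraph.dist_comm
      omega
  exact eq_of_dist_zero hc ha hz

lemma med_swap23 (a b c : V) : med hc ha a c b = med hc ha a b c :=
  med_unique hc ha (med_ac hc ha a c b) (med_ab hc ha a c b)
    (onP_symm hc ha (med_bc hc ha a c b))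

lemma med_rot (a b c : V) : med hc ha b c a = med hc ha a b c :=
  med_unique hc ha (onP_symm hc ha (med_ac hc ha b c a))
    (onP_symm hc ha (med_bc hc ha b c a)) (med_ab hc ha b c a)

lemma med_swap12 (a b c : V) : med hc ha b a c = med hc ha a b c :=
  med_unique hc ha (onP_symm hc ha (med_ab hc ha b a c)) (med_bc hc ha b a c)
    (med_ac hc ha b a c)

lemma med_aab (a b : V) : med hc ha a a b = a :=
  (med_unique hc ha (onP_left hc ha a a) (onP_left hc ha a b) (onP_left hc ha a b)).symm

lemma med_aba (a b : V) : med hc ha a b a = a :=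
  (med_unique hc ha (onP_left hc ha a b) (onP_left hc ha a a) (onP_right hc ha b a)).symm

lemma med_baa (a b : V) : med hc ha b a a = a :=
  (med_unique hc ha (onP_right hc ha b a) (onP_right hc ha b a) (onP_left hc ha a a)).symm

/-- The first step of the path from `v` to `u`. -/
noncomputable def dir (v u : V) : V := (pth hc v u).getVert 1

lemma dir_adj {v u : V} (h : v ≠ u) : G.Adj v (dir hc v u) :=
  Walk.adj_snd (Walk.not_nil_of_ne h)

lemma dir_onP (v u : V) : onP hc v u (dir hc v u) := by
  rw [onP, Walk.mem_support_iff_exists_getVert]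
  rcases Nat.eq_zero_or_pos (pth hc v u).length with h | h
  · refine ⟨0, ?_, by omega⟩
    rw [Walk.getVert_zero, dir, Walk.getVert_of_length_le _ (by omega)]
    exact Walk.eq_of_length_eq_zero h
  · exact ⟨1, rfl, h⟩

lemma dir_congr {v u w : V} (h : onP hc v u w) (hw : w ≠ v) :
    dir hc v u = dir hc v w := by
  have hsplit := pth_append hc ha h
  have hlen : 1 ≤ (pth hc v w).length := by
    rw [pth_length hc ha]
    have := (hc v w).pos_dist_of_ne (Ne.symm hw)
    omega
  rw [dir, hsplit, Walk.getVert_append]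
  rcases lt_or_eq_of_le hlen with h1 | h1
  · rw [if_pos h1]; rfl
  · rw [if_neg (by omega)]
    have e2 : (1:ℕ) - (pth hc v w).length = 0 := by omega
    rw [e2, Walk.getVert_zero, dir, h1, Walk.getVert_length]

lemma dir_ne_of_sep {x y v : V} (h : onP hc x y v) (hx : x ≠ v) (hy : y ≠ v) :
    dir hc v x ≠ dir hc v y := by
  intro heq
  have h1 : onP hc x v (dir hc v x) := onP_symm hc ha (dir_onP hc ha v x)
  have h2 : onP hc v y (dir hc v y) := dir_onP hc ha v y
  rw [← heq] at h2
  have := onP_mid hc ha h h1 h2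
  exact (dir_adj hc ha (Ne.symm hx)).ne' this

lemma sameside_dir {x y v : V} (h : ¬ onP hc x y v) (hx : x ≠ v) (hy : y ≠ v) :
    dir hc v x = dir hc v y := by
  set m := med hc ha v x y with hm
  have hmv : m ≠ v := by
    intro heq
    exact h (heq ▸ med_bc hc ha v x y)
  rw [dir_congr hc ha (med_ab hc ha v x y) hmv, dir_congr hc ha (med_ac hc ha v x y) hmv]

lemma pth_of_adj {u w : V} (h : G.Adj u w) : pth hc u w = Walk.cons h Walk.nil :=
  (path_eq hc ha (by
    rw [Walk.isPath_def, Walk.support_cons, Walk.support_nil]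
    exact List.nodup_cons.mpr ⟨by simp [h.ne], List.nodup_singleton w⟩)).symm

lemma dir_adj_eq {v n : V} (h : G.Adj v n) : dir hc v n = n := by
  rw [dir, pth_of_adj hc ha h]
  rfl

lemma onP_adj {u w v : V} (h : G.Adj u w) (h1 : onP hc u w v) : v = u ∨ v = w := by
  rw [onP, pth_of_adj hc ha h] at h1
  simp only [Walk.support_cons, Walk.support_nil, List.mem_cons, List.mem_singleton,
    List.not_mem_nil, or_false] at h1
  exact h1

lemma onP_of_two {v w m : V} (hvw : G.Adj v w) (hwm : G.Adj w m) (hvm : v ≠ m) :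
    onP hc v m w := by
  have hp : (Walk.cons hvw (Walk.cons hwm Walk.nil)).IsPath := by
    rw [Walk.isPath_def, Walk.support_cons, Walk.support_cons, Walk.support_nil]
    refine List.nodup_cons.mpr ⟨?_, List.nodup_cons.mpr ⟨by simp [hwm.ne], List.nodup_singleton m⟩⟩
    simp only [List.mem_cons, List.mem_singleton, List.not_mem_nil]
    push_neg
    exact ⟨hvw.ne, hvm, by simp⟩
  rw [onP, ← path_eq hc ha hp]
  simp

section FintypeV

variable [Fintype V]

lemma ncard_pair_le {d1 d2 : V} (h12 : d1 ≠ d2) {s : Set V}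
    (hs1 : d1 ∈ s) (hs2 : d2 ∈ s) : 2 ≤ s.ncard := by
  have h4 : ({d1, d2} : Set V).ncard = 2 := by
    rw [Set.ncard_insert_of_notMem (by simp [h12]), Set.ncard_singleton]
  have hsub : ({d1, d2} : Set V) ⊆ s := by
    intro x hx
    rcases hx with rfl | hx
    · exact hs1
    · rw [Set.mem_singleton_iff] at hx; exact hx ▸ hs2
  calc 2 = ({d1, d2} : Set V).ncard := h4.symm
    _ ≤ s.ncard := Set.ncard_le_ncard hsub (Set.toFinite _)

lemma two_le_deg_of_interior {x y m : V} (h : onP hc x y m) (hx : x ≠ m) (hy : y ≠ m) :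
    2 ≤ (G.neighborSet m).ncard := by
  refine ncard_pair_le hc ha (dir_ne_of_sep hc ha h hx hy) ?_ ?_
  · exact dir_adj hc ha (Ne.symm hx)
  · exact dir_adj hc ha (Ne.symm hy)

lemma four_sep_false {v w1 w2 w3 w4 : V} (hdeg : (G.neighborSet v).ncard = 3)
    (h1 : w1 ≠ v) (h2 : w2 ≠ v) (h3 : w3 ≠ v) (h4 : w4 ≠ v)
    (s12 : onP hc w1 w2 v) (s13 : onP hc w1 w3 v) (s14 : onP hc w1 w4 v)
    (s23 : onP hc w2 w3 v) (s24 : onP hc w2 w4 v) (s34 : onP hc w3 w4 v) : False := by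
  set d1 := dir hc v w1
  set d2 := dir hc v w2
  set d3 := dir hc v w3
  set d4 := dir hc v w4
  have e12 : d1 ≠ d2 := dir_ne_of_sep hc ha s12 h1 h2
  have e13 : d1 ≠ d3 := dir_ne_of_sep hc ha s13 h1 h3
  have e14 : d1 ≠ d4 := dir_ne_of_sep hc ha s14 h1 h4
  have e23 : d2 ≠ d3 := dir_ne_of_sep hc ha s23 h2 h3
  have e24 : d2 ≠ d4 := dir_ne_of_sep hc ha s24 h2 h4
  have e34 : d3 ≠ d4 := dir_ne_of_sep hc ha s34 h3 h4
  have hcard : ({d1, d2, d3, d4} : Set V).ncard = 4 := by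
    rw [Set.ncard_insert_of_notMem (by simp [e12, e13, e14]),
      Set.ncard_insert_of_notMem (by simp [e23, e24]),
      Set.ncard_insert_of_notMem (by simp [e34]), Set.ncard_singleton]
  have hsub : ({d1, d2, d3, d4} : Set V) ⊆ G.neighborSet v := by
    intro x hx
    rcases hx with rfl | rfl | rfl | hx
    · exact dir_adj hc ha (Ne.symm h1)
    · exact dir_adj hc ha (Ne.symm h2)
    · exact dir_adj hc ha (Ne.symm h3)
    · rw [Set.mem_singleton_iff] at hx
      exact hx ▸ dir_adj hc ha (Ne.symm h4)
  have := Set.ncard_le_ncard hsub (Set.toFinite _)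
  omega

lemma trichotomy {v x y z u : V} (hdeg : (G.neighborSet v).ncard = 3)
    (hx : x ≠ v) (hy : y ≠ v) (hz : z ≠ v) (hu : u ≠ v)
    (sxy : onP hc x y v) (sxz : onP hc x z v) (syz : onP hc y z v) :
    ¬ onP hc u x v ∨ ¬ onP hc u y v ∨ ¬ onP hc u z v := by
  by_contra hcon
  push_neg at hcon
  exact four_sep_false hc ha hdeg hx hy hz hu sxy sxz
    (onP_symm hc ha hcon.1) syz (onP_symm hc ha hcon.2.1) (onP_symm hc ha hcon.2.2)

lemma exists_far_leaf {v n : V} (hadj : G.Adj v n) :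
    ∃ u : V, (G.neighborSet u).ncard = 1 ∧ ¬ onP hc n u v := by
  classical
  set F : Finset V := Finset.univ.filter (fun u => ¬ onP hc n u v) with hF
  have hnF : n ∈ F := by
    simp only [hF, Finset.mem_filter, Finset.mem_univ, true_and]
    rw [onP_self hc ha]
    exact (hadj.ne)
  obtain ⟨u, huF, hmax⟩ := F.exists_max_image (G.dist v) ⟨n, hnF⟩
  simp only [hF, Finset.mem_filter, Finset.mem_univ, true_and] at huF
  have huv : u ≠ v := by
    intro heq
    exact huF (heq ▸ onP_right hc ha n v)
  set t := dir hc u v with ht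
  have hut : G.Adj u t := dir_adj hc ha huv
  refine ⟨u, ?_, huF⟩
  have hset : G.neighborSet u = {t} := by
    apply Set.eq_of_subset_of_subset ?_ (by simpa using hut)
    intro w hw
    rw [Set.mem_singleton_iff]
    by_contra hwt
    have hadj_uw : G.Adj u w := hw
    -- w is not on the path from v to u
    have hwp : ¬ onP hc v u w := by
      intro hmem
      have h1 : dir hc u v = dir hc u w :=
        dir_congr hc ha (onP_symm hc ha hmem) hadj_uw.ne'
      rw [dir_adj_eq hc ha hadj_uw] at h1
      exact hwt h1.symm
    -- extend the path by the edge u-w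
    have hvw : v ≠ w := by
      intro heq
      exact hwp (heq ▸ onP_left hc ha v u)
    have hq : ((pth hc v u).concat hadj_uw).IsPath := by
      rw [Walk.isPath_def, Walk.support_concat, ← List.concat_eq_append]
      refine List.Nodup.concat ?_ (pth_isPath hc v u).support_nodup
      exact hwp
    have hdist : G.dist v w = G.dist v u + 1 := by
      rw [← pth_length hc ha v w, ← path_eq hc ha hq, Walk.length_concat,
        pth_length hc ha v u]
    have hwF : w ∈ F := by
      simp only [hF, Finset.mem_filter, Finset.mem_univ, true_and]
      intro hnw
      rcases onP_sub hc ha (b := u) hnw with h1 | h1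
      · exact huF h1
      · rcases onP_adj hc ha hadj_uw h1 with h2 | h2
        · exact huv h2.symm
        · subst h2
          have hds : G.dist v v = 0 := SimpleGraph.dist_self
          omega
    have := hmax w hwF
    omega
  rw [hset, Set.ncard_singleton]

lemma btw {a p q r u w : V} (hdeg : (G.neighborSet u).ncard = 3)
    (hu : u = med hc ha a p r) (hw : w = med hc ha a p q) (huw : u ≠ w)
    (hau : a ≠ u) (hpu : p ≠ u) (hqu : q ≠ u) (hru : r ≠ u) :
    onP hc a w u ↔ med hc ha a r q = u := by
  have sap : onP hc a p u := hu ▸ med_ab hc ha a p r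
  have sar : onP hc a r u := hu ▸ med_ac hc ha a p r
  have spr : onP hc p r u := hu ▸ med_bc hc ha a p r
  have waq : onP hc a q w := hw ▸ med_ac hc ha a p q
  constructor
  · intro h
    have saq : onP hc a q u := onP_of_left hc ha waq h
    rcases trichotomy hc ha hdeg hau hpu hru hqu sap sar spr with c | c | c
    · exact absurd (onP_symm hc ha saq) c
    · -- q on the r-free, p-free side?  c : ¬ onP q p u, so q separated from r
      have srq : onP hc r q u := by
        rcases onP_sub hc ha (b := q) (onP_symm hc ha spr) with h1 | h1
        · exact h1
        · exact absurd h1 c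
      exact (med_unique hc ha sar saq srq).symm
    · exfalso
      have spq : onP hc p q u := by
        rcases onP_sub hc ha (b := q) spr with h1 | h1
        · exact h1
        · exact absurd h1 c
      exact huw ((med_unique hc ha sap saq spq).trans hw.symm)
  · intro h
    have saq : onP hc a q u := h ▸ med_ac hc ha a r q
    exact hw ▸ med_pre hc ha u sap saq

end FintypeV

end PhyloAux


namespace PhyloLayer

open PhyloAux

attribute [instance] PhyloTree.fintypeV

noncomputable instance (priority := high) {α : Type} {X : Finset α} (T : PhyloTree X) :
    DecidableEq T.V := Classical.decEq _

variable {α : Type} {X : Finset α}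

/-- Median of the three leaves labelled `x`, `y`, `z`. -/
noncomputable def M (T : PhyloTree X) (x y z : α) : T.V :=
  med T.connected T.acyclic (T.leaf x) (T.leaf y) (T.leaf z)

/-- `v` is an internal (non-leaf-labelled) vertex. -/
def IsInt (T : PhyloTree X) (v : T.V) : Prop := ∀ x ∈ X, T.leaf x ≠ v

lemma int_deg {T : PhyloTree X} {v : T.V} (h : IsInt T v) :
    (T.G.neighborSet v).ncard = 3 := T.internal_degree v h

lemma int_of_two_le {T : PhyloTree X} {v : T.V} (h : 2 ≤ (T.G.neighborSet v).ncard) :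
    IsInt T v := by
  intro x hx heq
  have := T.leaf_degree x hx
  rw [heq] at this
  omega

lemma leaf_ne {T : PhyloTree X} {x y : α} (hx : x ∈ X) (hy : y ∈ X) (hxy : x ≠ y) :
    T.leaf x ≠ T.leaf y := fun h => hxy (T.leaf_inj x hx y hy h)

lemma M_swap23 (T : PhyloTree X) (x y z : α) : M T x z y = M T x y z :=
  med_swap23 T.connected T.acyclic _ _ _

lemma M_rot (T : PhyloTree X) (x y z : α) : M T y z x = M T x y z :=
  med_rot T.connected T.acyclic _ _ _

lemma M_swap12 (T : PhyloTree X) (x y z : α) : M T y x z = M T x y z :=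
  med_swap12 T.connected T.acyclic _ _ _

lemma M_ab (T : PhyloTree X) (x y z : α) : onP T.connected (T.leaf x) (T.leaf y) (M T x y z) :=
  med_ab T.connected T.acyclic _ _ _

lemma M_ac (T : PhyloTree X) (x y z : α) : onP T.connected (T.leaf x) (T.leaf z) (M T x y z) :=
  med_ac T.connected T.acyclic _ _ _

lemma M_bc (T : PhyloTree X) (x y z : α) : onP T.connected (T.leaf y) (T.leaf z) (M T x y z) :=
  med_bc T.connected T.acyclic _ _ _

lemma M_int {T : PhyloTree X} {x y z : α} (hx : x ∈ X) (hy : y ∈ X) (hz : z ∈ X)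
    (hxy : x ≠ y) (hxz : x ≠ z) (hyz : y ≠ z) : IsInt T (M T x y z) := by
  apply int_of_two_le
  by_cases h1 : T.leaf x = M T x y z
  · exact two_le_deg_of_interior T.connected T.acyclic (M_bc T x y z)
      (h1 ▸ leaf_ne hy hx (Ne.symm hxy)) (h1 ▸ leaf_ne hz hx (Ne.symm hxz))
  · by_cases h2 : T.leaf y = M T x y z
    · exact two_le_deg_of_interior T.connected T.acyclic (M_ac T x y z)
        h1 (h2 ▸ leaf_ne hz hy (Ne.symm hyz))
    · exact two_le_deg_of_interior T.connected T.acyclic (M_ab T x y z) h1 h2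

lemma resolves_iff {T : PhyloTree X} {x y z w : α}
    (hx : x ∈ X) (hy : y ∈ X) (hz : z ∈ X) (hw : w ∈ X)
    (hxy : x ≠ y) (hxz : x ≠ z) (hxw : x ≠ w) (hyz : y ≠ z) (hyw : y ≠ w) (hzw : z ≠ w) :
    T.ResolvesAs x y z w ↔ M T x y z = M T x y w := by
  set hc := T.connected
  set ha := T.acyclic
  constructor
  · rintro ⟨p, q, hp, hq, hdisj⟩
    rw [path_eq hc ha hp] at hdisj
    have hdisj' : ∀ v, onP hc (T.leaf x) (T.leaf y) v → ¬ onP hc (T.leaf z) (T.leaf w) v := by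
      intro v h1 h2
      exact (hdisj v h1) ((path_eq hc ha hq) ▸ h2)
    set m1 := M T x y z with hm1
    have hint : IsInt T m1 := M_int hx hy hz hxy hxz hyz
    have hdeg : (T.G.neighborSet m1).ncard = 3 := int_deg hint
    have hlx : T.leaf x ≠ m1 := hint x hx
    have hly : T.leaf y ≠ m1 := hint y hy
    have hlz : T.leaf z ≠ m1 := hint z hz
    have hlw : T.leaf w ≠ m1 := hint w hw
    rcases trichotomy hc ha hdeg hlx hly hlz hlw (M_ab T x y z) (M_ac T x y z) (M_bc T x y z)
      with htr | htr | htr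
    · exfalso
      rcases onP_sub hc ha (b := T.leaf w) (onP_symm hc ha (M_ac T x y z)) with h1 | h1
      · exact hdisj' m1 (M_ab T x y z) h1
      · exact htr h1
    · exfalso
      rcases onP_sub hc ha (b := T.leaf w) (onP_symm hc ha (M_bc T x y z)) with h1 | h1
      · exact hdisj' m1 (M_ab T x y z) h1
      · exact htr h1
    · -- w is on the z-side: medians coincide
      apply med_unique hc ha (M_ab T x y z)
      · rcases onP_sub hc ha (b := T.leaf w) (M_ac T x y z) with h1 | h1
        · exact h1
        · exact absurd h1 htr
      · rcases onP_sub hc ha (b := T.leaf w) (M_bc T x y z) with h1 | h1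
        · exact h1
        · exact absurd h1 htr
  · intro heq
    set m := M T x y z with hm
    have hint : IsInt T m := M_int hx hy hz hxy hxz hyz
    have hdeg : (T.G.neighborSet m).ncard = 3 := int_deg hint
    have hlx : T.leaf x ≠ m := hint x hx
    have hly : T.leaf y ≠ m := hint y hy
    have hlz : T.leaf z ≠ m := hint z hz
    have hlw : T.leaf w ≠ m := hint w hw
    have sxw : onP hc (T.leaf x) (T.leaf w) m := heq ▸ M_ac T x y w
    have syw : onP hc (T.leaf y) (T.leaf w) m := heq ▸ M_bc T x y w
    have hzw' : ¬ onP hc (T.leaf z) (T.leaf w) m := by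
      intro hcon
      exact four_sep_false hc ha hdeg hlx hly hlz hlw (M_ab T x y z) (M_ac T x y z)
        sxw (M_bc T x y z) syw hcon
    refine ⟨pth hc (T.leaf x) (T.leaf y), pth hc (T.leaf z) (T.leaf w),
      pth_isPath hc _ _, pth_isPath hc _ _, ?_⟩
    intro v hv hq
    have hv' : onP hc (T.leaf x) (T.leaf y) v := hv
    have hq' : onP hc (T.leaf z) (T.leaf w) v := hq
    -- v is on the path x..y; m is the attachment point of z (and w)
    have key : onP hc (T.leaf z) v m := by
      rcases onP_cases hc ha (M_ab T x y z) hv' with h1 | h1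
      · -- v between x and m
        apply onP_glue hc ha
        intro u hu1 hu2
        have hu3 : onP hc m (T.leaf x) u :=
          onP_of_left hc ha (onP_symm hc ha h1) hu2
        exact onP_mid hc ha (onP_symm hc ha (M_ac T x y z)) hu1 hu3
      · -- v between m and y
        apply onP_glue hc ha
        intro u hu1 hu2
        have hu3 : onP hc m (T.leaf y) u := onP_of_left hc ha h1 hu2
        exact onP_mid hc ha (onP_symm hc ha (M_bc T x y z)) hu1 hu3
    exact hzw' (onP_of_left hc ha hq' key)


lemma card_four {β : Type} [DecidableEq β] {x y z w : β} (hxy : x ≠ y) (hxz : x ≠ z)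
    (hxw : x ≠ w) (hyz : y ≠ z) (hyw : y ≠ w) (hzw : z ≠ w) :
    ({x, y, z, w} : Finset β).card = 4 := by
  rw [Finset.card_insert_of_notMem (by simp [hxy, hxz, hxw]),
    Finset.card_insert_of_notMem (by simp [hyz, hyw]),
    Finset.card_insert_of_notMem (by simp [hzw]), Finset.card_singleton]

lemma sep_of_classes {T : PhyloTree X} {v p q r : T.V}
    (h1 : ¬ onP T.connected p r v) (h2 : ¬ onP T.connected q r v)
    (h3 : onP T.connected p q v) : False := by
  rcases onP_sub T.connected T.acyclic (b := r) h3 with h4 | h4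
  · exact h1 h4
  · exact h2 (onP_symm T.connected T.acyclic h4)


lemma int_rep {T : PhyloTree X} {v : T.V} (hv : IsInt T v) :
    ∃ x y z : α, x ∈ X ∧ y ∈ X ∧ z ∈ X ∧ x ≠ y ∧ x ≠ z ∧ y ≠ z ∧ M T x y z = v := by
  set hc := T.connected
  set ha := T.acyclic
  have hdeg : (T.G.neighborSet v).ncard = 3 := int_deg hv
  obtain ⟨n1, n2, n3, h12, h13, h23, hset⟩ := Set.ncard_eq_three.mp hdeg
  have adj1 : T.G.Adj v n1 := by rw [← SimpleGraph.mem_neighborSet, hset]; simp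
  have adj2 : T.G.Adj v n2 := by rw [← SimpleGraph.mem_neighborSet, hset]; simp
  have adj3 : T.G.Adj v n3 := by rw [← SimpleGraph.mem_neighborSet, hset]; simp
  obtain ⟨u1, hu1deg, hn1⟩ := exists_far_leaf hc ha adj1
  obtain ⟨u2, hu2deg, hn2⟩ := exists_far_leaf hc ha adj2
  obtain ⟨u3, hu3deg, hn3⟩ := exists_far_leaf hc ha adj3
  obtain ⟨x, hxX, hlx⟩ := T.degree_one_is_leaf u1 hu1deg
  obtain ⟨y, hyX, hly⟩ := T.degree_one_is_leaf u2 hu2deg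
  obtain ⟨z, hzX, hlz⟩ := T.degree_one_is_leaf u3 hu3deg
  have hu1v : u1 ≠ v := fun h => hn1 (h ▸ onP_right hc ha n1 v)
  have hu2v : u2 ≠ v := fun h => hn2 (h ▸ onP_right hc ha n2 v)
  have hu3v : u3 ≠ v := fun h => hn3 (h ▸ onP_right hc ha n3 v)
  have d1 : dir hc v u1 = n1 :=
    (sameside_dir hc ha hn1 adj1.ne' hu1v).symm.trans (dir_adj_eq hc ha adj1)
  have d2 : dir hc v u2 = n2 :=
    (sameside_dir hc ha hn2 adj2.ne' hu2v).symm.trans (dir_adj_eq hc ha adj2)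
  have d3 : dir hc v u3 = n3 :=
    (sameside_dir hc ha hn3 adj3.ne' hu3v).symm.trans (dir_adj_eq hc ha adj3)
  have s12 : onP hc u1 u2 v := by
    by_contra hcon
    exact h12 (d1 ▸ d2 ▸ sameside_dir hc ha hcon hu1v hu2v)
  have s13 : onP hc u1 u3 v := by
    by_contra hcon
    exact h13 (d1 ▸ d3 ▸ sameside_dir hc ha hcon hu1v hu3v)
  have s23 : onP hc u2 u3 v := by
    by_contra hcon
    exact h23 (d2 ▸ d3 ▸ sameside_dir hc ha hcon hu2v hu3v)
  have e12 : u1 ≠ u2 := by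
    intro h
    subst h
    rw [onP_self hc ha] at s12
    exact hu1v s12.symm
  have e13 : u1 ≠ u3 := by
    intro h
    subst h
    rw [onP_self hc ha] at s13
    exact hu1v s13.symm
  have e23 : u2 ≠ u3 := by
    intro h
    subst h
    rw [onP_self hc ha] at s23
    exact hu2v s23.symm
  refine ⟨x, y, z, hxX, hyX, hzX, ?_, ?_, ?_, ?_⟩
  · intro hxy; exact e12 (hlx ▸ hly ▸ congrArg T.leaf hxy)
  · intro hxz; exact e13 (hlx ▸ hlz ▸ congrArg T.leaf hxz)
  · intro hyz; exact e23 (hly ▸ hlz ▸ congrArg T.leaf hyz)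
  · refine (med_unique hc ha ?_ ?_ ?_).symm
    · rw [hlx, hly]; exact s12
    · rw [hlx, hlz]; exact s13
    · rw [hly, hlz]; exact s23

lemma third_rep {T : PhyloTree X} {v : T.V} (hv : IsInt T v) {s t : T.V}
    (hs : s ≠ v) (ht : t ≠ v) (hst : onP T.connected s t v) :
    ∃ r ∈ X, onP T.connected s (T.leaf r) v ∧ onP T.connected t (T.leaf r) v := by
  obtain ⟨a, b, c, haX, hbX, hcX, dab, dac, dbc, hM⟩ := int_rep hv
  have hab : onP T.connected (T.leaf a) (T.leaf b) v := hM ▸ M_ab T a b c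
  have hac : onP T.connected (T.leaf a) (T.leaf c) v := hM ▸ M_ac T a b c
  have hbc : onP T.connected (T.leaf b) (T.leaf c) v := hM ▸ M_bc T a b c
  have hdeg : (T.G.neighborSet v).ncard = 3 := int_deg hv
  have pick : ∀ {p : T.V} {w1 w2 : T.V}, ¬ onP T.connected p w1 v → onP T.connected w1 w2 v → onP T.connected p w2 v := by
    intro p w1 w2 h1 h2
    rcases onP_sub T.connected T.acyclic (b := p) h2 with h3 | h3
    · exact absurd (onP_symm T.connected T.acyclic h3) h1
    · exact h3
  rcases trichotomy T.connected T.acyclic hdeg (hv a haX) (hv b hbX) (hv c hcX) hs hab hac hbc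
      with cs | cs | cs <;>
    rcases trichotomy T.connected T.acyclic hdeg (hv a haX) (hv b hbX) (hv c hcX) ht hab hac hbc
      with ct | ct | ct
  · exact (sep_of_classes cs ct hst).elim
  · exact ⟨c, hcX, pick cs hac, pick ct hbc⟩
  · exact ⟨b, hbX, pick cs hab, pick ct (onP_symm T.connected T.acyclic hbc)⟩
  · exact ⟨c, hcX, pick cs hbc, pick ct hac⟩
  · exact (sep_of_classes cs ct hst).elim
  · exact ⟨a, haX, pick cs (onP_symm T.connected T.acyclic hab), pick ct (onP_symm T.connected T.acyclic hac)⟩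
  · exact ⟨b, hbX, pick cs (onP_symm T.connected T.acyclic hbc), pick ct hab⟩
  · exact ⟨a, haX, pick cs (onP_symm T.connected T.acyclic hac), pick ct (onP_symm T.connected T.acyclic hab)⟩
  · exact (sep_of_classes cs ct hst).elim

section Transfer

variable [DecidableEq α] {T T' : PhyloTree X}

lemma step (h : ∀ q : Finset α, q ⊆ X → q.card = 4 → PhyloTree.ResolveIdentically T T' q)
    {x y z w : α} (hx : x ∈ X) (hy : y ∈ X) (hz : z ∈ X) (hw : w ∈ X)
    (hxy : x ≠ y) (hxz : x ≠ z) (hyz : y ≠ z) (hxw : x ≠ w) (hyw : y ≠ w) :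
    (M T x y z = M T x y w) ↔ (M T' x y z = M T' x y w) := by
  by_cases hzw : z = w
  · subst hzw; exact iff_of_true rfl rfl
  · have hsub : ({x, y, z, w} : Finset α) ⊆ X := by
      intro t ht
      simp only [Finset.mem_insert, Finset.mem_singleton] at ht
      rcases ht with rfl | rfl | rfl | rfl <;> assumption
    have hres := h _ hsub (card_four hxy hxz hxw hyz hyw hzw) x y z w rfl
    rw [← resolves_iff hx hy hz hw hxy hxz hxw hyz hyw hzw,
      ← resolves_iff hx hy hz hw hxy hxz hxw hyz hyw hzw]
    exact hres

lemma chain_aligned (h : ∀ q : Finset α, q ⊆ X → q.card = 4 → PhyloTree.ResolveIdentically T T' q)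
    {x y z x' y' z' : α} (hx : x ∈ X) (hy : y ∈ X) (hz : z ∈ X)
    (hx' : x' ∈ X) (hy' : y' ∈ X) (hz' : z' ∈ X)
    (dxy : x ≠ y) (dxz : x ≠ z) (dyz : y ≠ z)
    (d12 : x' ≠ y') (d13 : x' ≠ z') (d23 : y' ≠ z')
    (cx : ¬ onP T.connected (T.leaf x') (T.leaf x) (M T x y z))
    (cy : ¬ onP T.connected (T.leaf y') (T.leaf y) (M T x y z))
    (cz : ¬ onP T.connected (T.leaf z') (T.leaf z) (M T x y z))
    (heq : M T x' y' z' = M T x y z) :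
    M T' x' y' z' = M T' x y z := by
  set hc := T.connected
  set ha := T.acyclic
  have hint : IsInt T (M T x y z) := M_int hx hy hz dxy dxz dyz
  have hOxz' : onP hc (T.leaf x) (T.leaf z') (M T x y z) := by
    rcases onP_sub hc ha (b := T.leaf z') (M_ac T x y z) with h1 | h1
    · exact h1
    · exact absurd h1 cz
  have hOyz' : onP hc (T.leaf y) (T.leaf z') (M T x y z) := by
    rcases onP_sub hc ha (b := T.leaf z') (M_bc T x y z) with h1 | h1
    · exact h1
    · exact absurd h1 cz
  have hOxy' : onP hc (T.leaf x) (T.leaf y') (M T x y z) := by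
    rcases onP_sub hc ha (b := T.leaf y') (M_ab T x y z) with h1 | h1
    · exact h1
    · exact absurd h1 cy
  have hOy'z' : onP hc (T.leaf y') (T.leaf z') (M T x y z) := by
    rcases onP_sub hc ha (b := T.leaf y') (onP_symm hc ha hOyz')  with h1 | h1
    · exact onP_symm hc ha h1
    · exact absurd h1 cy
  have ne_lab : ∀ p q : α, p ∈ X → onP hc (T.leaf p) (T.leaf q) (M T x y z) → p ≠ q := by
    intro p q hp hpq hne
    subst hne
    rw [onP_self hc ha] at hpq
    exact hint p hp hpq.symm
  have nxz' : x ≠ z' := ne_lab x z' hx hOxz'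
  have nyz' : y ≠ z' := ne_lab y z' hy hOyz'
  have nxy' : x ≠ y' := ne_lab x y' hx hOxy'
  have A1 : M T x y z = M T x y z' :=
    med_unique hc ha (M_ab T x y z) hOxz' hOyz'
  have S1 : M T' x y z = M T' x y z' :=
    (step h hx hy hz hz' dxy dxz dyz nxz' nyz').mp A1
  have A2 : M T x y z = M T x y' z' :=
    med_unique hc ha hOxy' hOxz' hOy'z'
  have E2 : M T x z' y = M T x z' y' :=
    (M_swap23 T x y z').trans (A1.symm.trans (A2.trans (M_swap23 T x y' z').symm))
  have S2 : M T' x z' y = M T' x z' y' :=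
    (step h hx hz' hy hy' nxz' dxy (Ne.symm nyz') nxy' (Ne.symm d23)).mp E2
  have S2' : M T' x y z' = M T' x y' z' :=
    (M_swap23 T' x y z').symm.trans (S2.trans (M_swap23 T' x y' z'))
  have E3 : M T y' z' x = M T y' z' x' :=
    ((M_rot T x y' z').trans A2.symm).trans (heq.symm.trans (M_rot T x' y' z').symm)
  have S3 : M T' y' z' x = M T' y' z' x' :=
    (step h hy' hz' hx hx' d23 (Ne.symm nxy') (Ne.symm nxz') (Ne.symm d12) (Ne.symm d13)).mp E3
  calc M T' x' y' z' = M T' y' z' x' := (M_rot T' x' y' z').symm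
    _ = M T' y' z' x := S3.symm
    _ = M T' x y' z' := M_rot T' x y' z'
    _ = M T' x y z' := S2'.symm
    _ = M T' x y z := S1.symm

lemma chain (h : ∀ q : Finset α, q ⊆ X → q.card = 4 → PhyloTree.ResolveIdentically T T' q)
    {x y z x' y' z' : α} (hx : x ∈ X) (hy : y ∈ X) (hz : z ∈ X)
    (hx' : x' ∈ X) (hy' : y' ∈ X) (hz' : z' ∈ X)
    (dxy : x ≠ y) (dxz : x ≠ z) (dyz : y ≠ z)
    (d12 : x' ≠ y') (d13 : x' ≠ z') (d23 : y' ≠ z')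
    (heq : M T x' y' z' = M T x y z) :
    M T' x' y' z' = M T' x y z := by
  have hint : IsInt T (M T x y z) := M_int hx hy hz dxy dxz dyz
  have hdeg : (T.G.neighborSet (M T x y z)).ncard = 3 := int_deg hint
  have tri' : ∀ u, u ∈ X →
      ¬ onP T.connected (T.leaf u) (T.leaf x) (M T x y z) ∨
      ¬ onP T.connected (T.leaf u) (T.leaf y) (M T x y z) ∨
      ¬ onP T.connected (T.leaf u) (T.leaf z) (M T x y z) := fun u hu =>
    trichotomy T.connected T.acyclic hdeg (hint x hx) (hint y hy) (hint z hz) (hint u hu)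
      (M_ab T x y z) (M_ac T x y z) (M_bc T x y z)
  have hOx'y' : onP T.connected (T.leaf x') (T.leaf y') (M T x y z) := heq ▸ M_ab T x' y' z'
  have hOx'z' : onP T.connected (T.leaf x') (T.leaf z') (M T x y z) := heq ▸ M_ac T x' y' z'
  have hOy'z' : onP T.connected (T.leaf y') (T.leaf z') (M T x y z) := heq ▸ M_bc T x' y' z'
  rcases tri' x' hx' with cx | cx | cx <;> rcases tri' y' hy' with cy | cy | cy <;>
      rcases tri' z' hz' with cz | cz | cz <;>
    first
    | exact (sep_of_classes cx cy hOx'y').elim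
    | exact (sep_of_classes cx cz hOx'z').elim
    | exact (sep_of_classes cy cz hOy'z').elim
    | exact chain_aligned h hx hy hz hx' hy' hz' dxy dxz dyz d12 d13 d23 cx cy cz heq
    | exact (M_swap23 T' x' y' z').symm.trans
        (chain_aligned h hx hy hz hx' hz' hy' dxy dxz dyz d13 d12 (Ne.symm d23) cx cz cy
          ((M_swap23 T x' y' z').trans heq))
    | exact (M_swap12 T' x' y' z').symm.trans
        (chain_aligned h hx hy hz hy' hx' hz' dxy dxz dyz (Ne.symm d12) d23 d13 cy cx cz
          ((M_swap12 T x' y' z').trans heq))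
    | exact (((M_rot T' y' z' x').trans (M_rot T' x' y' z')).symm).trans
        (chain_aligned h hx hy hz hz' hx' hy' dxy dxz dyz (Ne.symm d13) (Ne.symm d23) d12 cz cx cy
          (((M_rot T y' z' x').trans (M_rot T x' y' z')).trans heq))
    | exact ((M_rot T' x' y' z').symm).trans
        (chain_aligned h hx hy hz hy' hz' hx' dxy dxz dyz d23 (Ne.symm d12) (Ne.symm d13) cy cz cx
          ((M_rot T x' y' z').trans heq))
    | exact (((M_swap12 T' y' z' x').trans (M_rot T' x' y' z')).symm).trans
        (chain_aligned h hx hy hz hz' hy' hx' dxy dxz dyz (Ne.symm d23) (Ne.symm d13) (Ne.symm d12)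
          cz cy cx
          (((M_swap12 T y' z' x').trans (M_rot T x' y' z')).trans heq))

end Transfer

lemma M_pre {T : PhyloTree X} {x y z : α} {v : T.V}
    (h1 : onP T.connected (T.leaf x) (T.leaf y) v)
    (h2 : onP T.connected (T.leaf x) (T.leaf z) v) :
    onP T.connected (T.leaf x) (M T x y z) v :=
  med_pre T.connected T.acyclic v h1 h2

lemma M_unique {T : PhyloTree X} {x y z : α} {v : T.V}
    (h1 : onP T.connected (T.leaf x) (T.leaf y) v)
    (h2 : onP T.connected (T.leaf x) (T.leaf z) v)
    (h3 : onP T.connected (T.leaf y) (T.leaf z) v) :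
    v = M T x y z :=
  med_unique T.connected T.acyclic h1 h2 h3

lemma M_btw {T : PhyloTree X} {x p q r : α} {u : T.V}
    (hdeg : (T.G.neighborSet u).ncard = 3) (hu : u = M T x p r) (huw : u ≠ M T x p q)
    (h1 : T.leaf x ≠ u) (h2 : T.leaf p ≠ u) (h3 : T.leaf q ≠ u) (h4 : T.leaf r ≠ u) :
    onP T.connected (T.leaf x) (M T x p q) u ↔ M T x r q = u :=
  btw T.connected T.acyclic hdeg hu rfl huw (Ne.symm h1).symm h2 h3 h4

lemma exists_mid_of_not_adj {T : PhyloTree X} {a b : T.V} (hne : a ≠ b)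
    (hnadj : ¬ T.G.Adj a b) : ∃ u, onP T.connected a b u ∧ u ≠ a ∧ u ≠ b := by
  refine ⟨dir T.connected a b, dir_onP T.connected T.acyclic a b,
    (dir_adj T.connected T.acyclic hne).ne', ?_⟩
  intro h
  exact hnadj (h ▸ dir_adj T.connected T.acyclic hne)

lemma int_of_mid {T : PhyloTree X} {a b u : T.V} (h : onP T.connected a b u)
    (ha' : a ≠ u) (hb' : b ≠ u) : IsInt T u :=
  int_of_two_le (two_le_deg_of_interior T.connected T.acyclic h ha' hb')

lemma no_leaf_adj {T : PhyloTree X} {x y z : α} (hx : x ∈ X) (hy : y ∈ X) (hz : z ∈ X)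
    (dxy : x ≠ y) (dzx : z ≠ x) (dzy : z ≠ y) : ¬ T.G.Adj (T.leaf x) (T.leaf y) := by
  intro hadj
  have hxz : T.leaf x ≠ T.leaf z := leaf_ne hx hz (Ne.symm dzx)
  have hcard := T.leaf_degree x hx
  obtain ⟨t, ht⟩ := Set.ncard_eq_one.mp hcard
  have h1 : T.leaf y = t := by
    have : T.leaf y ∈ T.G.neighborSet (T.leaf x) := hadj
    rwa [ht, Set.mem_singleton_iff] at this
  have h2 : dir T.connected (T.leaf x) (T.leaf z) = t := by
    have : dir T.connected (T.leaf x) (T.leaf z) ∈ T.G.neighborSet (T.leaf x) :=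
      dir_adj T.connected T.acyclic hxz
    rwa [ht, Set.mem_singleton_iff] at this
  have honP : onP T.connected (T.leaf x) (T.leaf z) (T.leaf y) := by
    have := dir_onP T.connected T.acyclic (T.leaf x) (T.leaf z)
    rwa [h2, ← h1] at this
  have h3 := two_le_deg_of_interior T.connected T.acyclic honP
    (leaf_ne hx hy dxy) (leaf_ne hz hy dzy)
  have h4 := T.leaf_degree y hy
  omega

/-- Criterion for adjacency of the leaf `x` with the median of `x`, `p`, `q`. -/
def CritL (T : PhyloTree X) (x p q : α) : Prop :=
  ¬ ∃ r ∈ X, r ≠ x ∧ r ≠ p ∧ M T x p r ≠ M T x p q ∧ M T x r p = M T x r q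

lemma critL_of_adj {T : PhyloTree X} {x p q : α} (hx : x ∈ X) (hp : p ∈ X) (hq : q ∈ X)
    (dxp : x ≠ p) (dxq : x ≠ q) (dpq : p ≠ q)
    (hadj : T.G.Adj (T.leaf x) (M T x p q)) : CritL T x p q := by
  rintro ⟨r, hrX, hrx, hrp, hne, heq2⟩
  have hu : M T x r q = M T x p r := heq2.symm.trans (M_swap23 T x p r)
  have huint : IsInt T (M T x p r) := M_int hx hp hrX dxp (Ne.symm hrx) (Ne.symm hrp)
  have h1 : onP T.connected (T.leaf x) (T.leaf q) (M T x p r) := hu ▸ M_ac T x r q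
  have h2 : onP T.connected (T.leaf x) (T.leaf p) (M T x p r) := M_ab T x p r
  have h3 : onP T.connected (T.leaf x) (M T x p q) (M T x p r) := M_pre h2 h1
  rcases onP_adj T.connected T.acyclic hadj h3 with h4 | h4
  · exact huint x hx h4.symm
  · exact hne h4

lemma adj_of_critL {T : PhyloTree X} {x p q : α} (hx : x ∈ X) (hp : p ∈ X) (hq : q ∈ X)
    (dxp : x ≠ p) (dxq : x ≠ q) (dpq : p ≠ q)
    (hcrit : CritL T x p q) : T.G.Adj (T.leaf x) (M T x p q) := by
  have hintw : IsInt T (M T x p q) := M_int hx hp hq dxp dxq dpq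
  by_contra hnadj
  obtain ⟨u, humem, hux, huw⟩ := exists_mid_of_not_adj (hintw x hx) hnadj
  have huint : IsInt T u := int_of_mid humem (Ne.symm hux) (Ne.symm huw)
  have hxp : onP T.connected (T.leaf x) (T.leaf p) u :=
    onP_of_left T.connected T.acyclic (M_ab T x p q) humem
  have hxq : onP T.connected (T.leaf x) (T.leaf q) u :=
    onP_of_left T.connected T.acyclic (M_ac T x p q) humem
  obtain ⟨r, hrX, hr1, hr2⟩ := third_rep huint (huint x hx) (huint p hp) hxp
  have hurep : u = M T x p r := M_unique hxp hr1 hr2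
  have hrx : r ≠ x := by
    rintro rfl
    rw [onP_self T.connected T.acyclic] at hr1
    exact (huint r hrX) hr1.symm
  have hrp : r ≠ p := by
    rintro rfl
    rw [onP_self T.connected T.acyclic] at hr2
    exact (huint r hrX) hr2.symm
  have hbtw := (M_btw (int_deg huint) hurep huw (huint x hx) (huint p hp)
    (huint q hq) (huint r hrX)).mp humem
  refine hcrit ⟨r, hrX, hrx, hrp, ?_, ?_⟩
  · rw [← hurep]; exact huw
  · calc M T x r p = M T x p r := M_swap23 T x p r
      _ = u := hurep.symm
      _ = M T x r q := hbtw.symm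

/-- Criterion for adjacency of two internal vertices. -/
def CritI (T : PhyloTree X) (x1 y1 x2 y2 : α) : Prop :=
  ¬ ∃ r ∈ X, r ≠ x1 ∧ r ≠ y1 ∧ M T x1 y1 r ≠ M T x1 y1 x2 ∧ M T x1 y1 r ≠ M T x1 y1 y2 ∧
      M T x1 r y2 = M T x1 r y1 ∧ M T y1 r x2 = M T y1 r x1

section CritI

variable {T : PhyloTree X} {x1 x2 y1 y2 : α}

lemma critI_of_adj (hx1 : x1 ∈ X) (hx2 : x2 ∈ X) (hy1 : y1 ∈ X) (hy2 : y2 ∈ X)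
    (d12 : x1 ≠ x2) (dxy1 : x1 ≠ y1) (d1y2 : x1 ≠ y2) (d2y1 : x2 ≠ y1) (d2y2 : x2 ≠ y2)
    (dy12 : y1 ≠ y2)
    (hB : M T x1 x2 y1 = M T x1 x2 y2) (hC : M T y1 y2 x1 = M T y1 y2 x2)
    (hadj : T.G.Adj (M T x1 y1 x2) (M T x1 y1 y2)) : CritI T x1 y1 x2 y2 := by
  have hv2 : M T x1 x2 y2 = M T x1 y1 x2 := hB.symm.trans (M_swap23 T x1 y1 x2)
  have sxy_v : onP T.connected (T.leaf x1) (T.leaf y1) (M T x1 y1 x2) := M_ab T x1 y1 x2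
  have sx1y2_v : onP T.connected (T.leaf x1) (T.leaf y2) (M T x1 y1 x2) :=
    hv2 ▸ M_ac T x1 x2 y2
  have hxwv : onP T.connected (T.leaf x1) (M T x1 y1 y2) (M T x1 y1 x2) :=
    M_pre sxy_v sx1y2_v
  rintro ⟨r, hrX, hrx1, hry1, hnev, hnew, e1, e2⟩
  have hu1 : M T x1 r y2 = M T x1 y1 r := e1.trans (M_swap23 T x1 y1 r)
  have su_y2 : onP T.connected (T.leaf x1) (T.leaf y2) (M T x1 y1 r) := hu1 ▸ M_ac T x1 r y2
  have su_y1 : onP T.connected (T.leaf x1) (T.leaf y1) (M T x1 y1 r) := M_ab T x1 y1 r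
  have hxu : onP T.connected (T.leaf x1) (M T x1 y1 y2) (M T x1 y1 r) := M_pre su_y1 su_y2
  rcases onP_cases T.connected T.acyclic hxwv hxu with hcase | hcase
  · -- u between x1 and v: then u = v by uniqueness of the junction
    have hu2 : M T y1 r x2 = M T x1 y1 r :=
      e2.trans ((M_swap23 T y1 x1 r).trans (M_swap12 T x1 y1 r))
    have su_x2 : onP T.connected (T.leaf y1) (T.leaf x2) (M T x1 y1 r) := hu2 ▸ M_ac T y1 r x2
    have su_x1 : onP T.connected (T.leaf y1) (T.leaf x1) (M T x1 y1 r) :=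
      onP_symm T.connected T.acyclic su_y1
    have hyu : onP T.connected (T.leaf y1) (M T x1 y1 x2) (M T x1 y1 r) := by
      have h0 := M_pre su_x1 su_x2
      rwa [M_swap12 T x1 y1 x2] at h0
    exact hnev (onP_mid T.connected T.acyclic sxy_v hcase
      (onP_symm T.connected T.acyclic hyu))
  · rcases onP_adj T.connected T.acyclic hadj hcase with h4 | h4
    · exact hnev h4
    · exact hnew h4

lemma adj_of_critI (hx1 : x1 ∈ X) (hx2 : x2 ∈ X) (hy1 : y1 ∈ X) (hy2 : y2 ∈ X)
    (d12 : x1 ≠ x2) (dxy1 : x1 ≠ y1) (d1y2 : x1 ≠ y2) (d2y1 : x2 ≠ y1) (d2y2 : x2 ≠ y2)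
    (dy12 : y1 ≠ y2)
    (hB : M T x1 x2 y1 = M T x1 x2 y2) (hC : M T y1 y2 x1 = M T y1 y2 x2)
    (hvw : M T x1 y1 x2 ≠ M T x1 y1 y2)
    (hcrit : CritI T x1 y1 x2 y2) : T.G.Adj (M T x1 y1 x2) (M T x1 y1 y2) := by
  have hv2 : M T x1 x2 y2 = M T x1 y1 x2 := hB.symm.trans (M_swap23 T x1 y1 x2)
  have hw2 : M T y1 y2 x2 = M T x1 y1 y2 := hC.symm.trans (M_rot T x1 y1 y2)
  have sxy_v : onP T.connected (T.leaf x1) (T.leaf y1) (M T x1 y1 x2) := M_ab T x1 y1 x2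
  have sx1y2_v : onP T.connected (T.leaf x1) (T.leaf y2) (M T x1 y1 x2) :=
    hv2 ▸ M_ac T x1 x2 y2
  have sy1x2_w : onP T.connected (T.leaf y1) (T.leaf x2) (M T x1 y1 y2) :=
    hw2 ▸ M_ac T y1 y2 x2
  have sx1y1_w : onP T.connected (T.leaf x1) (T.leaf y1) (M T x1 y1 y2) := M_ab T x1 y1 y2
  have hxwv : onP T.connected (T.leaf x1) (M T x1 y1 y2) (M T x1 y1 x2) :=
    M_pre sxy_v sx1y2_v
  have hyvw : onP T.connected (T.leaf y1) (M T x1 y1 x2) (M T x1 y1 y2) := by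
    have h0 := M_pre (onP_symm T.connected T.acyclic sx1y1_w) sy1x2_w
    rwa [M_swap12 T x1 y1 x2] at h0
  by_contra hnadj
  obtain ⟨u, humem, huv, huw⟩ := exists_mid_of_not_adj hvw hnadj
  have huint : IsInt T u := int_of_mid humem (Ne.symm huv) (Ne.symm huw)
  have hyvu : onP T.connected (T.leaf y1) (M T x1 y1 x2) u :=
    onP_of_right T.connected T.acyclic hyvw (onP_symm T.connected T.acyclic humem)
  have hxwu : onP T.connected (T.leaf x1) (M T x1 y1 y2) u :=
    onP_of_right T.connected T.acyclic hxwv humem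
  have hxyu : onP T.connected (T.leaf x1) (T.leaf y1) u :=
    onP_of_right T.connected T.acyclic sxy_v (onP_symm T.connected T.acyclic hyvu)
  obtain ⟨r, hrX, hr1, hr2⟩ := third_rep huint (huint x1 hx1) (huint y1 hy1) hxyu
  have hurep : u = M T x1 y1 r := M_unique hxyu hr1 hr2
  have hrx : r ≠ x1 := by
    rintro rfl
    rw [onP_self T.connected T.acyclic] at hr1
    exact (huint r hrX) hr1.symm
  have hry : r ≠ y1 := by
    rintro rfl
    rw [onP_self T.connected T.acyclic] at hr2
    exact (huint r hrX) hr2.symm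
  have e1' := (M_btw (int_deg huint) hurep huw (huint x1 hx1) (huint y1 hy1)
    (huint y2 hy2) (huint r hrX)).mp hxwu
  have hurep2 : u = M T y1 x1 r := hurep.trans (M_swap12 T x1 y1 r).symm
  have huv2 : u ≠ M T y1 x1 x2 := by
    rw [M_swap12 T x1 y1 x2]; exact huv
  have hyvu2 : onP T.connected (T.leaf y1) (M T y1 x1 x2) u := by
    rw [M_swap12 T x1 y1 x2]; exact hyvu
  have e2' := (M_btw (int_deg huint) hurep2 huv2 (huint y1 hy1) (huint x1 hx1)
    (huint x2 hx2) (huint r hrX)).mp hyvu2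
  refine hcrit ⟨r, hrX, hrx, hry, ?_, ?_, ?_, ?_⟩
  · rw [← hurep]; exact huv
  · rw [← hurep]; exact huw
  · calc M T x1 r y2 = u := e1'
      _ = M T x1 y1 r := hurep
      _ = M T x1 r y1 := (M_swap23 T x1 y1 r).symm
  · calc M T y1 r x2 = u := e2'
      _ = M T y1 x1 r := hurep2
      _ = M T y1 r x1 := (M_swap23 T y1 x1 r).symm

end CritI

lemma nbrs_of_int {T : PhyloTree X} {v w : T.V} (hdeg : (T.G.neighborSet v).ncard = 3)
    (hw : T.G.Adj v w) : ∃ a b, T.G.Adj v a ∧ T.G.Adj v b ∧ a ≠ b ∧ a ≠ w ∧ b ≠ w := by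
  obtain ⟨n1, n2, n3, h12, h13, h23, hset⟩ := Set.ncard_eq_three.mp hdeg
  have hmem : w ∈ ({n1, n2, n3} : Set T.V) := hset ▸ hw
  have m1 : T.G.Adj v n1 := by rw [← SimpleGraph.mem_neighborSet, hset]; simp
  have m2 : T.G.Adj v n2 := by rw [← SimpleGraph.mem_neighborSet, hset]; simp
  have m3 : T.G.Adj v n3 := by rw [← SimpleGraph.mem_neighborSet, hset]; simp
  simp only [Set.mem_insert_iff, Set.mem_singleton_iff] at hmem
  rcases hmem with rfl | rfl | rfl
  · exact ⟨n2, n3, m2, m3, h23, Ne.symm h12, Ne.symm h13⟩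
  · exact ⟨n1, n3, m1, m3, h13, h12, Ne.symm h23⟩
  · exact ⟨n1, n2, m1, m2, h12, h13, h23⟩

lemma rep_with_x {T : PhyloTree X} {w : T.V} (hint : IsInt T w) {x : α} (hx : x ∈ X) :
    ∃ p q, p ∈ X ∧ q ∈ X ∧ x ≠ p ∧ x ≠ q ∧ p ≠ q ∧ M T x p q = w := by
  obtain ⟨a, b, c, haX, hbX, hcX, dab, dac, dbc, hM⟩ := int_rep hint
  have hab : onP T.connected (T.leaf a) (T.leaf b) w := hM ▸ M_ab T a b c
  have hac : onP T.connected (T.leaf a) (T.leaf c) w := hM ▸ M_ac T a b c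
  have hbc : onP T.connected (T.leaf b) (T.leaf c) w := hM ▸ M_bc T a b c
  have pick : ∀ {p w1 w2 : T.V}, ¬ onP T.connected p w1 w → onP T.connected w1 w2 w →
      onP T.connected p w2 w := by
    intro p w1 w2 h1 h2
    rcases onP_sub T.connected T.acyclic (b := p) h2 with h3 | h3
    · exact absurd (onP_symm T.connected T.acyclic h3) h1
    · exact h3
  rcases trichotomy T.connected T.acyclic (int_deg hint) (hint a haX) (hint b hbX)
      (hint c hcX) (hint x hx) hab hac hbc with cx | cx | cx
  · have nxb : x ≠ b := by rintro rfl; exact cx (onP_symm T.connected T.acyclic hab)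
    have nxc : x ≠ c := by rintro rfl; exact cx (onP_symm T.connected T.acyclic hac)
    exact ⟨b, c, hbX, hcX, nxb, nxc, dbc, (M_unique (pick cx hab) (pick cx hac) hbc).symm⟩
  · have nxa : x ≠ a := by rintro rfl; exact cx hab
    have nxc : x ≠ c := by rintro rfl; exact cx (onP_symm T.connected T.acyclic hbc)
    exact ⟨a, c, haX, hcX, nxa, nxc, dac,
      (M_unique (pick cx (onP_symm T.connected T.acyclic hab)) (pick cx hbc) hac).symm⟩
  · have nxa : x ≠ a := by rintro rfl; exact cx hac
    have nxb : x ≠ b := by rintro rfl; exact cx hbc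
    exact ⟨a, b, haX, hbX, nxa, nxb, dab,
      (M_unique (pick cx (onP_symm T.connected T.acyclic hac))
        (pick cx (onP_symm T.connected T.acyclic hbc)) hab).symm⟩

lemma int_adj_rep {T : PhyloTree X} {v w : T.V} (hv : IsInt T v) (hw : IsInt T w)
    (hadj : T.G.Adj v w) :
    ∃ x1 y1 x2 y2 : α, x1 ∈ X ∧ y1 ∈ X ∧ x2 ∈ X ∧ y2 ∈ X ∧
      x1 ≠ x2 ∧ x1 ≠ y1 ∧ x1 ≠ y2 ∧ x2 ≠ y1 ∧ x2 ≠ y2 ∧ y1 ≠ y2 ∧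
      M T x1 y1 x2 = v ∧ M T x1 y1 y2 = w ∧
      M T x1 x2 y1 = M T x1 x2 y2 ∧ M T y1 y2 x1 = M T y1 y2 x2 := by
  set hc := T.connected with hhc
  set ha := T.acyclic with hha
  obtain ⟨a, b, hva, hvb, hab, haw, hbw⟩ := nbrs_of_int (int_deg hv) hadj
  obtain ⟨a', b', hwa', hwb', hab', ha'v, hb'v⟩ := nbrs_of_int (int_deg hw) hadj.symm
  obtain ⟨u1, hu1deg, hu1p⟩ := exists_far_leaf hc ha hva
  obtain ⟨u2, hu2deg, hu2p⟩ := exists_far_leaf hc ha hvb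
  obtain ⟨q1, hq1deg, hq1p⟩ := exists_far_leaf hc ha hwa'
  obtain ⟨q2, hq2deg, hq2p⟩ := exists_far_leaf hc ha hwb'
  obtain ⟨x1, hx1X, hlx1⟩ := T.degree_one_is_leaf u1 hu1deg
  obtain ⟨x2, hx2X, hlx2⟩ := T.degree_one_is_leaf u2 hu2deg
  obtain ⟨y1, hy1X, hly1⟩ := T.degree_one_is_leaf q1 hq1deg
  obtain ⟨y2, hy2X, hly2⟩ := T.degree_one_is_leaf q2 hq2deg
  have hu1v : u1 ≠ v := fun h => hu1p (h ▸ onP_right hc ha a v)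
  have hu2v : u2 ≠ v := fun h => hu2p (h ▸ onP_right hc ha b v)
  have hq1w : q1 ≠ w := fun h => hq1p (h ▸ onP_right hc ha a' w)
  have hq2w : q2 ≠ w := fun h => hq2p (h ▸ onP_right hc ha b' w)
  have du1 : dir hc v u1 = a := (sameside_dir hc ha hu1p hva.ne' hu1v).symm.trans
    (dir_adj_eq hc ha hva)
  have du2 : dir hc v u2 = b := (sameside_dir hc ha hu2p hvb.ne' hu2v).symm.trans
    (dir_adj_eq hc ha hvb)
  have dq1w : dir hc w q1 = a' := (sameside_dir hc ha hq1p hwa'.ne' hq1w).symm.trans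
    (dir_adj_eq hc ha hwa')
  have dq2w : dir hc w q2 = b' := (sameside_dir hc ha hq2p hwb'.ne' hq2w).symm.trans
    (dir_adj_eq hc ha hwb')
  -- the leaves q1, q2 hang on the w-side of v
  have hq1v : ¬ onP hc w q1 v := by
    intro hcon
    have h1 : dir hc w q1 = dir hc w v := dir_congr hc ha hcon hadj.ne
    rw [dq1w, dir_adj_eq hc ha hadj.symm] at h1
    exact ha'v h1
  have hq2v : ¬ onP hc w q2 v := by
    intro hcon
    have h1 : dir hc w q2 = dir hc w v := dir_congr hc ha hcon hadj.ne
    rw [dq2w, dir_adj_eq hc ha hadj.symm] at h1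
    exact hb'v h1
  have hu1w : ¬ onP hc v u1 w := by
    intro hcon
    have h1 : dir hc v u1 = dir hc v w := dir_congr hc ha hcon hadj.ne'
    rw [du1, dir_adj_eq hc ha hadj] at h1
    exact haw h1
  have hu2w : ¬ onP hc v u2 w := by
    intro hcon
    have h1 : dir hc v u2 = dir hc v w := dir_congr hc ha hcon hadj.ne'
    rw [du2, dir_adj_eq hc ha hadj] at h1
    exact hbw h1
  have hq1vne : q1 ≠ v := fun h => hq1v (h ▸ onP_right hc ha w v)
  have hq2vne : q2 ≠ v := fun h => hq2v (h ▸ onP_right hc ha w v)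
  have hu1wne : u1 ≠ w := fun h => hu1w (h ▸ onP_right hc ha v w)
  have hu2wne : u2 ≠ w := fun h => hu2w (h ▸ onP_right hc ha v w)
  have dq1v : dir hc v q1 = w := (sameside_dir hc ha hq1v hadj.ne' hq1vne).symm.trans
    (dir_adj_eq hc ha hadj)
  have dq2v : dir hc v q2 = w := (sameside_dir hc ha hq2v hadj.ne' hq2vne).symm.trans
    (dir_adj_eq hc ha hadj)
  have du1w : dir hc w u1 = v := (sameside_dir hc ha hu1w hadj.ne hu1wne).symm.trans
    (dir_adj_eq hc ha hadj.symm)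
  have du2w : dir hc w u2 = v := (sameside_dir hc ha hu2w hadj.ne hu2wne).symm.trans
    (dir_adj_eq hc ha hadj.symm)
  -- separations at v
  have sepv : ∀ {s t : T.V}, s ≠ v → t ≠ v → dir hc v s ≠ dir hc v t → onP hc s t v := by
    intro s t hs ht hd
    by_contra hcon
    exact hd (sameside_dir hc ha hcon hs ht)
  have s12 : onP hc u1 u2 v := sepv hu1v hu2v (by rw [du1, du2]; exact hab)
  have s1q1 : onP hc u1 q1 v := sepv hu1v hq1vne (by rw [du1, dq1v]; exact haw)
  have s1q2 : onP hc u1 q2 v := sepv hu1v hq2vne (by rw [du1, dq2v]; exact haw)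
  have s2q1 : onP hc u2 q1 v := sepv hu2v hq1vne (by rw [du2, dq1v]; exact hbw)
  have s2q2 : onP hc u2 q2 v := sepv hu2v hq2vne (by rw [du2, dq2v]; exact hbw)
  -- separations at w
  have sepw : ∀ {s t : T.V}, s ≠ w → t ≠ w → dir hc w s ≠ dir hc w t → onP hc s t w := by
    intro s t hs ht hd
    by_contra hcon
    exact hd (sameside_dir hc ha hcon hs ht)
  have t12 : onP hc q1 q2 w := sepw hq1w hq2w (by rw [dq1w, dq2w]; exact hab')
  have t1q1 : onP hc u1 q1 w := sepw hu1wne hq1w (by rw [du1w, dq1w]; exact Ne.symm ha'v)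
  have t1q2 : onP hc u1 q2 w := sepw hu1wne hq2w (by rw [du1w, dq2w]; exact Ne.symm hb'v)
  have t2q1 : onP hc u2 q1 w := sepw hu2wne hq1w (by rw [du2w, dq1w]; exact Ne.symm ha'v)
  have t2q2 : onP hc u2 q2 w := sepw hu2wne hq2w (by rw [du2w, dq2w]; exact Ne.symm hb'v)
  -- vertex distinctness
  have vne : ∀ {s t : T.V}, onP hc s t v → s ≠ v → s ≠ t := by
    intro s t hst hs heq
    subst heq
    rw [onP_self hc ha] at hst
    exact hs hst.symm
  have e12 : u1 ≠ u2 := vne s12 hu1v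
  have e1q1 : u1 ≠ q1 := vne s1q1 hu1v
  have e1q2 : u1 ≠ q2 := vne s1q2 hu1v
  have e2q1 : u2 ≠ q1 := vne s2q1 hu2v
  have e2q2 : u2 ≠ q2 := vne s2q2 hu2v
  have eq12 : q1 ≠ q2 := by
    intro heq
    subst heq
    rw [onP_self hc ha] at t12
    exact hq1w t12.symm
  refine ⟨x1, y1, x2, y2, hx1X, hy1X, hx2X, hy2X, ?_, ?_, ?_, ?_, ?_, ?_, ?_, ?_, ?_, ?_⟩
  · intro hxy; exact e12 (hlx1 ▸ hlx2 ▸ congrArg T.leaf hxy)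
  · intro hxy; exact e1q1 (hlx1 ▸ hly1 ▸ congrArg T.leaf hxy)
  · intro hxy; exact e1q2 (hlx1 ▸ hly2 ▸ congrArg T.leaf hxy)
  · intro hxy; exact e2q1 (hlx2 ▸ hly1 ▸ congrArg T.leaf hxy)
  · intro hxy; exact e2q2 (hlx2 ▸ hly2 ▸ congrArg T.leaf hxy)
  · intro hxy; exact eq12 (hly1 ▸ hly2 ▸ congrArg T.leaf hxy)
  · refine (M_unique ?_ ?_ ?_).symm
    · rw [hlx1, hly1]; exact s1q1
    · rw [hlx1, hlx2]; exact s12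
    · rw [hly1, hlx2]; exact onP_symm hc ha s2q1
  · refine (M_unique ?_ ?_ ?_).symm
    · rw [hlx1, hly1]; exact t1q1
    · rw [hlx1, hly2]; exact t1q2
    · rw [hly1, hly2]; exact t12
  · have hB1 : v = M T x1 x2 y1 := by
      refine M_unique ?_ ?_ ?_
      · rw [hlx1, hlx2]; exact s12
      · rw [hlx1, hly1]; exact s1q1
      · rw [hlx2, hly1]; exact s2q1
    have hB2 : v = M T x1 x2 y2 := by
      refine M_unique ?_ ?_ ?_
      · rw [hlx1, hlx2]; exact s12
      · rw [hlx1, hly2]; exact s1q2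
      · rw [hlx2, hly2]; exact s2q2
    exact hB1.symm.trans hB2
  · have hC1 : w = M T y1 y2 x1 := by
      refine M_unique ?_ ?_ ?_
      · rw [hly1, hly2]; exact t12
      · rw [hly1, hlx1]; exact onP_symm hc ha t1q1
      · rw [hly2, hlx1]; exact onP_symm hc ha t1q2
    have hC2 : w = M T y1 y2 x2 := by
      refine M_unique ?_ ?_ ?_
      · rw [hly1, hly2]; exact t12
      · rw [hly1, hlx2]; exact onP_symm hc ha t2q1
      · rw [hly2, hlx2]; exact onP_symm hc ha t2q2
    exact hC1.symm.trans hC2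

section Phi

variable [DecidableEq α] {T T' : PhyloTree X}

open Classical in
/-- The canonical vertex map between the two trees. -/
noncomputable def phi (T T' : PhyloTree X) (v : T.V) : T'.V :=
  if h : ∃ x ∈ X, T.leaf x = v then T'.leaf (Classical.choose h)
  else if h2 : ∃ t : α × α × α, t.1 ∈ X ∧ t.2.1 ∈ X ∧ t.2.2 ∈ X ∧
      t.1 ≠ t.2.1 ∧ t.1 ≠ t.2.2 ∧ t.2.1 ≠ t.2.2 ∧ M T t.1 t.2.1 t.2.2 = v then
    M T' (Classical.choose h2).1 (Classical.choose h2).2.1 (Classical.choose h2).2.2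
  else Classical.choice T'.connected.nonempty

lemma phi_leaf (T T' : PhyloTree X) {x : α} (hx : x ∈ X) :
    phi T T' (T.leaf x) = T'.leaf x := by
  have h : ∃ y ∈ X, T.leaf y = T.leaf x := ⟨x, hx, rfl⟩
  unfold phi
  rw [dif_pos h]
  obtain ⟨hy1, hy2⟩ := Classical.choose_spec h
  exact congrArg T'.leaf (T.leaf_inj _ hy1 x hx hy2)

lemma phi_int (hres : ∀ q : Finset α, q ⊆ X → q.card = 4 → PhyloTree.ResolveIdentically T T' q)
    {v : T.V} {x y z : α}
    (hx : x ∈ X) (hy : y ∈ X) (hz : z ∈ X) (dxy : x ≠ y) (dxz : x ≠ z) (dyz : y ≠ z)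
    (hM : M T x y z = v) : phi T T' v = M T' x y z := by
  have hint : IsInt T v := hM ▸ M_int hx hy hz dxy dxz dyz
  have h1 : ¬ ∃ s ∈ X, T.leaf s = v := by rintro ⟨s, hs, hsv⟩; exact hint s hs hsv
  have h2 : ∃ t : α × α × α, t.1 ∈ X ∧ t.2.1 ∈ X ∧ t.2.2 ∈ X ∧
      t.1 ≠ t.2.1 ∧ t.1 ≠ t.2.2 ∧ t.2.1 ≠ t.2.2 ∧ M T t.1 t.2.1 t.2.2 = v :=
    ⟨(x, y, z), hx, hy, hz, dxy, dxz, dyz, hM⟩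
  unfold phi
  rw [dif_neg h1, dif_pos h2]
  obtain ⟨m1, m2, m3, d1, d2, d3, hMt⟩ := Classical.choose_spec h2
  exact chain hres hx hy hz m1 m2 m3 dxy dxz dyz d1 d2 d3 (hMt.trans hM.symm)

lemma phi_linv (hres : ∀ q : Finset α, q ⊆ X → q.card = 4 → PhyloTree.ResolveIdentically T T' q)
    (hres' : ∀ q : Finset α, q ⊆ X → q.card = 4 → PhyloTree.ResolveIdentically T' T q)
    (v : T.V) : phi T' T (phi T T' v) = v := by
  by_cases hL : ∃ x ∈ X, T.leaf x = v
  · obtain ⟨x, hx, hxv⟩ := hL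
    rw [← hxv, phi_leaf T T' hx, phi_leaf T' T hx]
  · have hint : IsInt T v := fun x hx heq => hL ⟨x, hx, heq⟩
    obtain ⟨x, y, z, hx, hy, hz, dxy, dxz, dyz, hM⟩ := int_rep hint
    rw [phi_int hres hx hy hz dxy dxz dyz hM, phi_int hres' hx hy hz dxy dxz dyz rfl]
    exact hM

lemma critL_transfer
    (hres : ∀ q : Finset α, q ⊆ X → q.card = 4 → PhyloTree.ResolveIdentically T T' q)
    {x p q : α} (hx : x ∈ X) (hp : p ∈ X) (hq : q ∈ X)
    (dxp : x ≠ p) (dxq : x ≠ q) (dpq : p ≠ q) (h : CritL T x p q) : CritL T' x p q := by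
  rintro ⟨r, hrX, hrx, hrp, hne', heq'⟩
  have hrq : r ≠ q := by rintro rfl; exact hne' rfl
  refine h ⟨r, hrX, hrx, hrp, ?_, ?_⟩
  · intro hcon
    exact hne' ((step hres hx hp hrX hq dxp (Ne.symm hrx) (Ne.symm hrp) dxq dpq).mp hcon)
  · exact (step hres hx hrX hp hq (Ne.symm hrx) dxp hrp dxq hrq).mpr heq'

lemma critI_transfer
    (hres : ∀ q : Finset α, q ⊆ X → q.card = 4 → PhyloTree.ResolveIdentically T T' q)
    {x1 x2 y1 y2 : α} (hx1 : x1 ∈ X) (hx2 : x2 ∈ X) (hy1 : y1 ∈ X) (hy2 : y2 ∈ X)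
    (d12 : x1 ≠ x2) (dxy1 : x1 ≠ y1) (d1y2 : x1 ≠ y2) (d2y1 : x2 ≠ y1) (d2y2 : x2 ≠ y2)
    (dy12 : y1 ≠ y2) (h : CritI T x1 y1 x2 y2) : CritI T' x1 y1 x2 y2 := by
  rintro ⟨r, hrX, hr1, hr2, n1', n2', e1', e2'⟩
  have hrx2 : r ≠ x2 := by rintro rfl; exact n1' rfl
  have hry2 : r ≠ y2 := by rintro rfl; exact n2' rfl
  refine h ⟨r, hrX, hr1, hr2, ?_, ?_, ?_, ?_⟩
  · intro hcon
    exact n1' ((step hres hx1 hy1 hrX hx2 dxy1 (Ne.symm hr1) (Ne.symm hr2) d12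
      (Ne.symm d2y1)).mp hcon)
  · intro hcon
    exact n2' ((step hres hx1 hy1 hrX hy2 dxy1 (Ne.symm hr1) (Ne.symm hr2) d1y2 dy12).mp hcon)
  · exact (step hres hx1 hrX hy2 hy1 (Ne.symm hr1) d1y2 hry2 dxy1 hr2).mpr e1'
  · exact (step hres hy1 hrX hx2 hx1 (Ne.symm hr2) (Ne.symm d2y1) hrx2 (Ne.symm dxy1) hr1).mpr e2'

lemma phi_adj_leaf_int
    (hres : ∀ q : Finset α, q ⊆ X → q.card = 4 → PhyloTree.ResolveIdentically T T' q)
    {x : α} (hx : x ∈ X) {w : T.V} (hintw : IsInt T w)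
    (hadj : T.G.Adj (T.leaf x) w) :
    T'.G.Adj (phi T T' (T.leaf x)) (phi T T' w) := by
  obtain ⟨p, q, hp, hq, dxp, dxq, dpq, hMw⟩ := rep_with_x hintw hx
  have hadj' : T.G.Adj (T.leaf x) (M T x p q) := by rw [hMw]; exact hadj
  have hcrit := critL_of_adj hx hp hq dxp dxq dpq hadj'
  have hcrit' : CritL T' x p q := critL_transfer hres hx hp hq dxp dxq dpq hcrit
  have hfin := adj_of_critL (T := T') hx hp hq dxp dxq dpq hcrit'
  rw [phi_leaf T T' hx, phi_int hres hx hp hq dxp dxq dpq hMw]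
  exact hfin

lemma phi_adj
    (hres : ∀ q : Finset α, q ⊆ X → q.card = 4 → PhyloTree.ResolveIdentically T T' q)
    (hcard : 4 ≤ X.card) {v w : T.V} (hadj : T.G.Adj v w) :
    T'.G.Adj (phi T T' v) (phi T T' w) := by
  by_cases hLv : ∃ s ∈ X, T.leaf s = v
  · by_cases hLw : ∃ s ∈ X, T.leaf s = w
    · exfalso
      obtain ⟨x, hx, rfl⟩ := hLv
      obtain ⟨y, hy, rfl⟩ := hLw
      have hxy : x ≠ y := fun h => hadj.ne (congrArg T.leaf h)
      have hne : (X \ {x, y}).Nonempty := by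
        by_contra hemp
        rw [Finset.not_nonempty_iff_eq_empty, Finset.sdiff_eq_empty_iff_subset] at hemp
        have h1 := Finset.card_le_card hemp
        have h2 : ({x, y} : Finset α).card ≤ 2 :=
          (Finset.card_insert_le x {y}).trans (by simp)
        omega
      obtain ⟨z, hzmem⟩ := hne
      simp only [Finset.mem_sdiff, Finset.mem_insert, Finset.mem_singleton] at hzmem
      push_neg at hzmem
      exact (no_leaf_adj hx hy hzmem.1 hxy hzmem.2.1 hzmem.2.2) hadj
    · obtain ⟨x, hx, rfl⟩ := hLv
      exact phi_adj_leaf_int hres hx (fun s hs heq => hLw ⟨s, hs, heq⟩) hadj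
  · by_cases hLw : ∃ s ∈ X, T.leaf s = w
    · obtain ⟨y, hy, rfl⟩ := hLw
      exact (phi_adj_leaf_int hres hy (fun s hs heq => hLv ⟨s, hs, heq⟩) hadj.symm).symm
    · -- both internal
      have hintv : IsInt T v := fun s hs heq => hLv ⟨s, hs, heq⟩
      have hintw : IsInt T w := fun s hs heq => hLw ⟨s, hs, heq⟩
      obtain ⟨x1, y1, x2, y2, hx1, hy1, hx2, hy2, d12, dxy1, d1y2, d2y1, d2y2, dy12,
        hMv, hMw, hB, hC⟩ := int_adj_rep hintv hintw hadj
      have hvw : M T x1 y1 x2 ≠ M T x1 y1 y2 := by rw [hMv, hMw]; exact hadj.ne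
      have hcrit := critI_of_adj hx1 hx2 hy1 hy2 d12 dxy1 d1y2 d2y1 d2y2 dy12 hB hC
        (by rw [hMv, hMw]; exact hadj)
      have hB' := (step hres hx1 hx2 hy1 hy2 d12 dxy1 d2y1 d1y2 d2y2).mp hB
      have hC' := (step hres hy1 hy2 hx1 hx2 dy12 (Ne.symm dxy1) (Ne.symm d1y2)
        (Ne.symm d2y1) (Ne.symm d2y2)).mp hC
      have hvw' : M T' x1 y1 x2 ≠ M T' x1 y1 y2 := fun hcon => hvw
        ((step hres hx1 hy1 hx2 hy2 dxy1 d12 (Ne.symm d2y1) d1y2 dy12).mpr hcon)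
      have hcrit' : CritI T' x1 y1 x2 y2 :=
        critI_transfer hres hx1 hx2 hy1 hy2 d12 dxy1 d1y2 d2y1 d2y2 dy12 hcrit
      have hfin := adj_of_critI (T := T') hx1 hx2 hy1 hy2 d12 dxy1 d1y2 d2y1 d2y2 dy12
        hB' hC' hvw' hcrit'
      rw [phi_int hres hx1 hy1 hx2 dxy1 d12 (Ne.symm d2y1) hMv,
        phi_int hres hx1 hy1 hy2 dxy1 d1y2 dy12 hMw]
      exact hfin

end Phi

end PhyloLayer

/-- two binary phylogenetic `X`-trees resolving every 4-element subset
of `X` identically are label-isomorphic. -/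
theorem labelIso_of_resolve_all_quartets {α : Type} [DecidableEq α]
    (X : Finset α) (hX : 4 ≤ X.card)
    (T T' : PhyloTree X)
    (h : ∀ q : Finset α, q ⊆ X → q.card = 4 → PhyloTree.ResolveIdentically T T' q) :
    PhyloTree.LabelIso T T' := by
  classical
  have hres' : ∀ q : Finset α, q ⊆ X → q.card = 4 → PhyloTree.ResolveIdentically T' T q :=
    fun q hq hc a b c d heq => ((h q hq hc) a b c d heq).symm
  have linv : ∀ v, PhyloLayer.phi T' T (PhyloLayer.phi T T' v) = v :=
    PhyloLayer.phi_linv h hres'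
  have rinv : ∀ v, PhyloLayer.phi T T' (PhyloLayer.phi T' T v) = v :=
    PhyloLayer.phi_linv hres' h
  have hadj1 : ∀ {v w : T.V}, T.G.Adj v w →
      T'.G.Adj (PhyloLayer.phi T T' v) (PhyloLayer.phi T T' w) :=
    fun hvw => PhyloLayer.phi_adj h hX hvw
  have hadj2 : ∀ {v w : T'.V}, T'.G.Adj v w →
      T.G.Adj (PhyloLayer.phi T' T v) (PhyloLayer.phi T' T w) :=
    fun hvw => PhyloLayer.phi_adj hres' hX hvw
  refine ⟨{ toEquiv := ⟨PhyloLayer.phi T T', PhyloLayer.phi T' T, linv, rinv⟩,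
            map_rel_iff' := ?_ }, ?_⟩
  · intro v w
    constructor
    · intro h1
      simp only [Equiv.coe_fn_mk] at h1
      have h2 := hadj2 h1
      rwa [linv, linv] at h2
    · exact hadj1
  · intro x hx
    exact PhyloLayer.phi_leaf T T' hx
end
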